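/- arXiv:1912.07147 — 5 statements merged into one kernel-verified Lean document; each statement's English description precedes it below -/
import Mathlib

section
/- Let G be a 2-connected graph, and let P be a path in G of length at least three such that every internal vertex of P has degree two in G. Then for any rainbow 2-connected edge-colouring of G, the edges of P must receive pairwise distinct colours (i.e., P is a rainbow path). -/
open SimpleGraph

/-- A walk is rainbow (w.r.t. an edge-colouring `col`) if its edges receive
pairwise distinct colours. -/
def IsRainbowWalk {V α : Type*} {G : SimpleGraph V} {u v : V} (col : Sym2 V → α)
    (p : G.Walk u v) : Prop :=
  (p.edges.map col).Nodup

/-- An edge-colouring is rainbow 2-connected if every two distinct vertices are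
connected by two internally vertex-disjoint rainbow paths. -/
def RainbowTwoConnectedColouring {V α : Type*} (G : SimpleGraph V) (col : Sym2 V → α) : Prop :=
  ∀ u v : V, u ≠ v → ∃ p q : G.Walk u v, p.IsPath ∧ q.IsPath ∧ p ≠ q ∧
    IsRainbowWalk col p ∧ IsRainbowWalk col q ∧
    ∀ w : V, w ∈ p.support → w ∈ q.support → w = u ∨ w = v

/-- The rainbow 2-connection number: the least number of colours in a rainbow
2-connected colouring. -/
noncomputable def rc2 {V : Type*} (G : SimpleGraph V) : ℕ :=
  sInf {r : ℕ | ∃ col : Sym2 V → Fin r, RainbowTwoConnectedColouring G col}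

/-- A graph is 2-connected if it has at least 3 vertices and deleting any single
vertex leaves a connected graph. -/
def TwoConnected {V : Type*} [Fintype V] (G : SimpleGraph V) : Prop :=
  3 ≤ Fintype.card V ∧ ∀ v : V, (G.induce ({v}ᶜ : Set V)).Connected

/-- `t2 n r`: minimum number of edges of a 2-connected graph on `n` vertices
with rainbow 2-connection number at most `r`. -/
noncomputable def t2 (n r : ℕ) : ℕ :=
  sInf {m : ℕ | ∃ G : SimpleGraph (Fin n), TwoConnected G ∧ rc2 G ≤ r ∧ G.edgeSet.ncard = m}

/-- `s2 n r`: maximum number of edges of a 2-connected graph on `n` vertices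
with rainbow 2-connection number at least `r`. -/
noncomputable def s2 (n r : ℕ) : ℕ :=
  sSup {m : ℕ | ∃ G : SimpleGraph (Fin n), TwoConnected G ∧ r ≤ rc2 G ∧ G.edgeSet.ncard = m}

private lemma path_loop_eq {V : Type*} {G : SimpleGraph V} {u : V} (r : G.Walk u u)
    (hr : r.IsPath) : r = Walk.nil := by
  cases r with
  | nil => rfl
  | cons h q =>
    rw [Walk.cons_isPath_iff] at hr
    exact absurd q.end_mem_support hr.2

/-- Forcing lemma: if every vertex of a path `P : Walk y u` except possibly the
final vertex `u` has degree two, and `x` is a neighbour of `y` outside `P`, then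
any path from `y` to `u` avoiding `x` must equal `P`. -/
private lemma force {V : Type*} [Fintype V] [DecidableEq V] {G : SimpleGraph V}
    [DecidableRel G.Adj] :
    ∀ {y u : V} (P : G.Walk y u), P.IsPath →
    ∀ x : V, G.Adj x y → x ∉ P.support →
    (∀ w ∈ P.support, w ≠ u → G.degree w = 2) →
    ∀ r : G.Walk y u, r.IsPath → x ∉ r.support → r = P := by
  intro y u P
  induction P with
  | nil =>
    intro _ x _ _ _ r hr _
    exact path_loop_eq r hr
  | @cons y a u h P₁ ih =>
    intro hP x hxy hxP hdeg r hr hxr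
    rw [Walk.cons_isPath_iff] at hP
    have hyu : y ≠ u := fun hyu => hP.2 (hyu ▸ P₁.end_mem_support)
    cases r with
    | nil => exact absurd rfl hyu
    | @cons _ b _ hb r₃ =>
      rw [Walk.cons_isPath_iff] at hr
      have hdy : G.degree y = 2 := hdeg y (Walk.start_mem_support _) hyu
      have hxa : x ≠ a := fun hxa => hxP (by simp [hxa, Walk.support_cons, P₁.start_mem_support])
      have hsub : ({x, a} : Finset V) ⊆ G.neighborFinset y := by
        intro c hc
        rw [Finset.mem_insert, Finset.mem_singleton] at hc
        rcases hc with rfl | rfl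
        · exact (G.mem_neighborFinset _ _).2 hxy.symm
        · exact (G.mem_neighborFinset _ _).2 h
      have hcard : ({x, a} : Finset V).card = 2 := by
        rw [Finset.card_insert_of_notMem (by simpa using hxa), Finset.card_singleton]
      have heq : ({x, a} : Finset V) = G.neighborFinset y :=
        Finset.eq_of_subset_of_card_le hsub (by rw [hcard]; exact le_of_eq hdy)
      have hbmem : b ∈ ({x, a} : Finset V) := by
        rw [heq]; exact (G.mem_neighborFinset _ _).2 hb
      rw [Finset.mem_insert, Finset.mem_singleton] at hbmem
      have hbx : b ≠ x := by
        intro hbx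
        subst hbx
        exact hxr (by rw [Walk.support_cons]; exact List.mem_cons_of_mem _ r₃.start_mem_support)
      have hba : b = a := by rcases hbmem with h' | h' <;> [exact absurd h' hbx; exact h']
      subst hba
      have := ih hP.1 y h hP.2 (fun w hw hwu => hdeg w (by simp [Walk.support_cons, hw]) hwu)
        r₃ hr.1 hr.2
      rw [this]

private lemma nbr_pin {V : Type*} [Fintype V] [DecidableEq V] {G : SimpleGraph V}
    [DecidableRel G.Adj] {y x a b : V} (hdy : G.degree y = 2)
    (hx : G.Adj y x) (ha : G.Adj y a) (hb : G.Adj y b) (hxa : x ≠ a) (hbx : b ≠ x) : b = a := by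
  have hsub : ({x, a} : Finset V) ⊆ G.neighborFinset y := by
    intro c hc
    rw [Finset.mem_insert, Finset.mem_singleton] at hc
    rcases hc with rfl | rfl
    · exact (G.mem_neighborFinset _ _).2 hx
    · exact (G.mem_neighborFinset _ _).2 ha
  have hcard : ({x, a} : Finset V).card = 2 := by
    rw [Finset.card_insert_of_notMem (by simpa using hxa), Finset.card_singleton]
  have heq : ({x, a} : Finset V) = G.neighborFinset y :=
    Finset.eq_of_subset_of_card_le hsub (by rw [hcard]; exact le_of_eq hdy)
  have hbmem : b ∈ ({x, a} : Finset V) := by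
    rw [heq]; exact (G.mem_neighborFinset _ _).2 hb
  rw [Finset.mem_insert, Finset.mem_singleton] at hbmem
  rcases hbmem with h | h
  · exact absurd h hbx
  · exact h

/-- A forced path (all vertices except its end of degree two, with an extra
neighbour of its start outside it) is rainbow. -/
private lemma exists_rainbow_eq {V α : Type*} [Fintype V] [DecidableEq V] {G : SimpleGraph V}
    [DecidableRel G.Adj] {col : Sym2 V → α} (hcol : RainbowTwoConnectedColouring G col)
    {y u' : V} (P : G.Walk y u') (hP : P.IsPath) (hyu : y ≠ u')
    (x : V) (hxy : G.Adj x y) (hxP : x ∉ P.support)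
    (hdeg : ∀ w ∈ P.support, w ≠ u' → G.degree w = 2) :
    IsRainbowWalk col P := by
  have hx1 : x ≠ y := fun h => hxP (h ▸ P.start_mem_support)
  have hx2 : x ≠ u' := fun h => hxP (h ▸ P.end_mem_support)
  obtain ⟨q, q', hq, hq', _, hrq, hrq', hdisj⟩ := hcol y u' hyu
  by_cases hu : x ∈ q.support
  · have hx' : x ∉ q'.support := fun hx' => by
      rcases hdisj x hu hx' with h | h
      · exact hx1 h
      · exact hx2 h
    rw [← force P hP x hxy hxP hdeg q' hq' hx']
    exact hrq'
  · rw [← force P hP x hxy hxP hdeg q hq hu]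
    exact hrq

/-- In a 2-connected graph, any path of length ≥ 3 all of whose
internal vertices have degree two must be rainbow under any rainbow 2-connected
colouring. -/
theorem stmt0 {V : Type*} [Fintype V] [DecidableEq V] (G : SimpleGraph V) [DecidableRel G.Adj]
    (hG : TwoConnected G) {u v : V} (p : G.Walk u v) (hp : p.IsPath) (hlen : 3 ≤ p.length)
    (hdeg : ∀ w ∈ p.support, w ≠ u → w ≠ v → G.degree w = 2)
    {α : Type*} (col : Sym2 V → α) (hcol : RainbowTwoConnectedColouring G col) :
    IsRainbowWalk col p := by
  cases p with
  | nil => simp at hlen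
  | @cons _ w _ h01 p1 =>
    rw [Walk.cons_isPath_iff] at hp
    have hlen1 : 2 ≤ p1.length := by
      rw [Walk.length_cons] at hlen; omega
    have hwv : w ≠ v := by
      intro h
      subst h
      have := path_loop_eq p1 hp.1
      subst this
      simp at hlen1
    obtain ⟨z, hvz, s, hs⟩ := Walk.exists_eq_cons_of_ne (Ne.symm hwv) p1.reverse
    have hp1 : p1 = (Walk.cons hvz s).reverse := by rw [← hs, Walk.reverse_reverse]
    subst hp1
    -- basic facts
    have hcs : (Walk.cons hvz s).IsPath := (Walk.isPath_reverse_iff _).1 hp.1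
    rw [Walk.cons_isPath_iff] at hcs
    have hsp : s.IsPath := hcs.1
    have hvs : v ∉ s.support := hcs.2
    have hup : u ∉ v :: s.support := by
      have := hp.2
      rwa [Walk.support_reverse, List.mem_reverse, Walk.support_cons] at this
    have huv : u ≠ v := fun h => hup (h ▸ List.mem_cons_self)
    have hus : u ∉ s.support := fun h => hup (List.mem_cons_of_mem _ h)
    have hslen : 1 ≤ s.length := by
      rw [Walk.length_cons, Walk.length_reverse, Walk.length_cons] at hlen; omega
    have hzw : z ≠ w := by
      intro h
      subst h
      have := path_loop_eq s hsp
      subst this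
      simp at hslen
    have hsrne : w ≠ z := Ne.symm hzw
    have huw : u ≠ w := fun h => hus (h ▸ s.end_mem_support)
    have huz : u ≠ z := fun h => hus (h ▸ s.start_mem_support)
    have hvzne : v ≠ z := fun h => hvs (h ▸ s.start_mem_support)
    have hdegs : ∀ x ∈ s.support, G.degree x = 2 := by
      intro x hx
      have hxp : x ∈ (Walk.cons h01 (Walk.cons hvz s).reverse).support := by
        rw [Walk.support_cons]
        refine List.mem_cons_of_mem _ ?_
        rw [Walk.support_reverse, List.mem_reverse, Walk.support_cons]
        exact List.mem_cons_of_mem _ hx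
      exact hdeg x hxp (fun h => hus (h ▸ hx)) (fun h => hvs (h ▸ hx))
    have hmp : s.reverse.IsPath := (Walk.isPath_reverse_iff _).2 hsp
    have husr : u ∉ s.reverse.support := by
      rwa [Walk.support_reverse, List.mem_reverse]
    -- Application 1: the suffix walk w → v is rainbow
    have Hsuf : IsRainbowWalk col (Walk.cons hvz s).reverse := by
      apply exists_rainbow_eq hcol _ hp.1 hwv u h01 hp.2
      intro x hx hxv
      simp only [Walk.support_reverse, Walk.support_cons, List.mem_reverse,
        List.mem_cons] at hx
      rcases hx with rfl | hx
      · exact absurd rfl hxv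
      · exact hdegs x hx
    -- Application 2: the (reversed) prefix walk z → u is rainbow
    have hP2 : (Walk.cons h01 s.reverse).IsPath := by
      rw [Walk.cons_isPath_iff]
      exact ⟨hmp, husr⟩
    have Hpre : IsRainbowWalk col (Walk.cons h01 s.reverse).reverse := by
      apply exists_rainbow_eq hcol _ ((Walk.isPath_reverse_iff _).2 hP2) huz.symm v hvz
      · simp only [Walk.support_reverse, Walk.support_cons, List.mem_reverse, List.mem_cons]
        rintro (rfl | hx)
        · exact huv rfl
        · exact hvs hx
      · intro x hx hxu
        simp only [Walk.support_reverse, Walk.support_cons, List.mem_reverse,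
          List.mem_cons] at hx
        rcases hx with rfl | hx
        · exact absurd rfl hxu
        · exact hdegs x hx
    -- Application 3: the first and last edges receive distinct colours
    obtain ⟨d, hzd, s₁, hs₁⟩ := Walk.exists_eq_cons_of_ne hzw s
    obtain ⟨a, hwa, m₁, hm₁⟩ := Walk.exists_eq_cons_of_ne hsrne s.reverse
    have hdegsr : ∀ x ∈ s.reverse.support, x ≠ z → G.degree x = 2 := by
      intro x hx _
      rw [Walk.support_reverse, List.mem_reverse] at hx
      exact hdegs x hx
    have key : ∀ qo : G.Walk w z, qo.IsPath → IsRainbowWalk col qo → qo ≠ s.reverse →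
        col s(u, w) ≠ col s(v, z) := by
      intro qo hqo0 hrqo hqom hcoleq
      obtain ⟨b, hwb, t, ht⟩ := Walk.exists_eq_cons_of_ne hsrne qo
      subst ht
      have hqo := hqo0
      rw [Walk.cons_isPath_iff] at hqo
      have hdw : G.degree w = 2 := hdegs w s.end_mem_support
      have hmp' := hmp
      rw [hm₁, Walk.cons_isPath_iff] at hmp'
      have hua : u ≠ a := by
        intro h
        apply hus
        have ha : a ∈ s.reverse.support := by
          rw [hm₁, Walk.support_cons]
          exact List.mem_cons_of_mem _ m₁.start_mem_support
        rw [Walk.support_reverse, List.mem_reverse] at ha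
        exact h ▸ ha
      by_cases hbu : b = u
      · subst hbu
        -- first edge of qo is s(w, u); now examine the last edge
        have he0 : s(w, b) ∈ (Walk.cons hwb t).edges := by
          rw [Walk.edges_cons]
          exact List.mem_cons_self
        obtain ⟨c, hzc, t', ht'⟩ :=
          Walk.exists_eq_cons_of_ne hzw (Walk.cons hwb t).reverse
        have hqr : (Walk.cons hzc t').IsPath := by
          rw [← ht']
          exact (Walk.isPath_reverse_iff _).2 hqo0
        rw [Walk.cons_isPath_iff] at hqr
        have hdz : G.degree z = 2 := hdegs z s.start_mem_support
        have hsp' := hsp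
        rw [hs₁, Walk.cons_isPath_iff] at hsp'
        have hvd : v ≠ d := by
          intro h
          apply hvs
          have hd : d ∈ s.support := by
            rw [hs₁, Walk.support_cons]
            exact List.mem_cons_of_mem _ s₁.start_mem_support
          exact h ▸ hd
        by_cases hcv : c = v
        · -- last edge of qo is s(z, v)
          have hef : s(z, v) ∈ (Walk.cons hwb t).edges := by
            have h1 : s(z, c) ∈ (Walk.cons hwb t).reverse.edges := by
              rw [ht', Walk.edges_cons]
              exact List.mem_cons_self
            rw [Walk.edges_reverse, List.mem_reverse] at h1
            rwa [hcv] at h1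
          -- but their colours agree, contradicting rainbowness
          have hcol2 : col s(w, b) = col s(z, v) :=
            calc col s(w, b) = col s(b, w) := by rw [Sym2.eq_swap]
              _ = col s(v, z) := hcoleq
              _ = col s(z, v) := by rw [Sym2.eq_swap]
          have heq2 : s(w, b) = s(z, v) :=
            List.inj_on_of_nodup_map hrqo he0 hef hcol2
          rw [Sym2.eq_iff] at heq2
          rcases heq2 with ⟨h1, _⟩ | ⟨h1, _⟩
          · exact hsrne h1
          · exact hwv h1
        · have hcd : c = d := nbr_pin hdz hvz.symm hzd hzc hvd hcv
          subst hcd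
          apply hqom
          have hdegs₁ : ∀ x ∈ s₁.support, x ≠ w → G.degree x = 2 := by
            intro x hx _
            apply hdegs
            rw [hs₁, Walk.support_cons]
            exact List.mem_cons_of_mem _ hx
          have ht'' : t' = s₁ := force s₁ hsp'.1 z hzd hsp'.2 hdegs₁ t' hqr.1 hqr.2
          have : (Walk.cons hwb t).reverse = s := by
            rw [ht', ht'', hs₁]
          rw [← Walk.reverse_reverse (Walk.cons hwb t), this]
      · have hba : b = a := nbr_pin hdw h01.symm hwa hwb hua hbu
        subst hba
        apply hqom
        have hdegm₁ : ∀ x ∈ m₁.support, x ≠ z → G.degree x = 2 := by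
          intro x hx hxz
          apply hdegsr x _ hxz
          rw [hm₁, Walk.support_cons]
          exact List.mem_cons_of_mem _ hx
        rw [force m₁ hmp'.1 w hwa hmp'.2 hdegm₁ t hqo.1 hqo.2, hm₁]
    have Hne : col s(u, w) ≠ col s(v, z) := by
      obtain ⟨q, q', hq, hq', hqq, hrq, hrq', hdisj⟩ := hcol w z hsrne
      by_cases hu : u ∈ q.support
      · have hu' : u ∉ q'.support := by
          intro h
          rcases hdisj u hu h with h2 | h2
          · exact huw h2
          · exact huz h2
        apply key q hq hrq
        intro h
        rw [h] at hu
        exact husr hu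
      · have hqs : q = s.reverse :=
          force s.reverse hmp u h01 husr hdegsr q hq hu
        apply key q' hq' hrq'
        rw [← hqs]
        exact hqq.symm
    -- Assemble the three facts
    have Hpre' : (col s(u, w) :: (s.edges.map col).reverse).Nodup := by
      have h1 := Hpre
      unfold IsRainbowWalk at h1
      rw [Walk.edges_reverse, Walk.edges_cons, Walk.edges_reverse, List.map_reverse,
        List.nodup_reverse, List.map_cons, List.map_reverse] at h1
      exact h1
    unfold IsRainbowWalk at Hsuf ⊢
    rw [Walk.edges_cons, List.map_cons, List.nodup_cons]
    refine ⟨?_, Hsuf⟩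
    rw [Walk.edges_reverse, Walk.edges_cons, List.reverse_cons, List.map_append,
      List.map_reverse, List.mem_append]
    rintro (h1 | h1)
    · rw [List.nodup_cons] at Hpre'
      exact Hpre'.1 h1
    · rw [List.map_cons, List.map_nil, List.mem_singleton] at h1
      exact Hne h1
end

section
/- For every integer a ≥ 4 and every integer n with 2^{a−2} + a − 1 ≤ n ≤ 2^{a−1} + a − 1, there exists a 2-connected graph G on n vertices with exactly C(a,2) + a(n−a) edges (obtained from the complete bipartite graph with classes A of size a and B of size n−a by adding all edges inside A) such that rc₂(G) = 2. -/
open SimpleGraph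

open Finset

namespace Stmt2Aux

/-- weight of the first `L` bits of `m`. -/
def wt (L m : ℕ) : ℕ := ((Finset.range L).filter (fun t => m.testBit t)).card

/-- the vector in `{0,1}^a` associated to `m`. -/
def vec (a m i : ℕ) : Fin 2 :=
  if i < a - 1 then (if m.testBit i then 1 else 0)
  else if wt (a-1) m % 2 = 1 then 1 else 0

lemma vec_data {a m i : ℕ} (h : i < a - 1) :
    vec a m i = if m.testBit i then 1 else 0 := if_pos h

lemma vec_par {a m : ℕ} :
    vec a m (a-1) = if wt (a-1) m % 2 = 1 then 1 else 0 := if_neg (lt_irrefl _)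

lemma testBit_two_pow_add' {i j t : ℕ} (hij : i < j) :
    (2^i + 2^j).testBit t = decide (t = i ∨ t = j) := by
  rcases lt_trichotomy t j with h | rfl | h
  · rw [add_comm, Nat.testBit_two_pow_add_gt h, Nat.testBit_two_pow]
    rcases eq_or_ne t i with rfl | hne
    · simp [hij.ne]
    · simp [hne, Ne.symm hne, h.ne]
  · rw [add_comm, Nat.testBit_two_pow_add_eq,
      Nat.testBit_two_pow_of_ne hij.ne]
    simp
  · rw [Nat.testBit_lt_two_pow]
    · have : i ≠ t := by omega
      have : j ≠ t := by omega
      simp; omega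
    · calc 2^i + 2^j < 2^j + 2^j := by
            have := Nat.pow_lt_pow_right (by norm_num : 1 < 2) hij; omega
        _ = 2^(j+1) := by ring
        _ ≤ 2^t := Nat.pow_le_pow_right (by norm_num) h

lemma wt_two_pow {L i : ℕ} (h : i < L) : wt L (2^i) = 1 := by
  unfold wt
  have : (Finset.range L).filter (fun t => (2^i : ℕ).testBit t) = {i} := by
    ext t
    simp only [mem_filter, mem_range, mem_singleton, Nat.testBit_two_pow]
    constructor
    · rintro ⟨_, h2⟩; exact (of_decide_eq_true h2).symm
    · rintro rfl; exact ⟨h, by simp⟩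
  rw [this, card_singleton]

lemma wt_two_pow_add {L i j : ℕ} (hij : i < j) (hj : j < L) : wt L (2^i + 2^j) = 2 := by
  unfold wt
  have : (Finset.range L).filter (fun t => (2^i + 2^j : ℕ).testBit t) = {i, j} := by
    ext t
    simp only [mem_filter, mem_range, mem_insert, mem_singleton, testBit_two_pow_add' hij,
      decide_eq_true_eq]
    constructor
    · rintro ⟨_, h2⟩; exact h2
    · rintro (rfl | rfl)
      · exact ⟨by omega, Or.inl rfl⟩
      · exact ⟨hj, Or.inr rfl⟩
  rw [this, card_insert_of_notMem (by simp [hij.ne]), card_singleton]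

/-- L1: two distinct numbers below `2^(a-1)` give vectors differing in ≥ 2 coordinates. -/
lemma twoDiff {a m m' : ℕ} (ha : 4 ≤ a) (hm : m < 2^(a-1)) (hm' : m' < 2^(a-1))
    (hne : m ≠ m') :
    ∃ i j : ℕ, i < a ∧ j < a ∧ i ≠ j ∧ vec a m i ≠ vec a m' i ∧ vec a m j ≠ vec a m' j := by
  -- find a data bit where they differ
  have hex : ∃ t, m.testBit t ≠ m'.testBit t := by
    by_contra h
    push_neg at h
    exact hne (Nat.eq_of_testBit_eq h)
  obtain ⟨t, ht⟩ := hex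
  have htL : t < a - 1 := by
    by_contra hge
    push_neg at hge
    have h1 : m.testBit t = false := Nat.testBit_lt_two_pow (lt_of_lt_of_le hm (Nat.pow_le_pow_right (by norm_num) hge))
    have h2 : m'.testBit t = false := Nat.testBit_lt_two_pow (lt_of_lt_of_le hm' (Nat.pow_le_pow_right (by norm_num) hge))
    rw [h1, h2] at ht; exact ht rfl
  have hvt : vec a m t ≠ vec a m' t := by
    rw [vec_data htL, vec_data htL]
    cases h1 : m.testBit t <;> cases h2 : m'.testBit t <;> simp_all
  by_cases hs : ∃ s, s < a - 1 ∧ s ≠ t ∧ m.testBit s ≠ m'.testBit s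
  · obtain ⟨s, hsL, hst, hbit⟩ := hs
    refine ⟨t, s, by omega, by omega, hst.symm, hvt, ?_⟩
    rw [vec_data hsL, vec_data hsL]
    cases h1 : m.testBit s <;> cases h2 : m'.testBit s <;> simp_all
  · -- all other data bits agree; parities differ
    push_neg at hs
    have herase : ((Finset.range (a-1)).filter (fun s => m.testBit s)).erase t
        = ((Finset.range (a-1)).filter (fun s => m'.testBit s)).erase t := by
      ext s
      simp only [mem_erase, mem_filter, mem_range]
      constructor
      · rintro ⟨hst, hsL, hb⟩
        refine ⟨hst, hsL, ?_⟩
        by_contra hb'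
        have := hs s hsL hst
        simp [hb, hb'] at this
      · rintro ⟨hst, hsL, hb⟩
        refine ⟨hst, hsL, ?_⟩
        by_contra hb'
        have := hs s hsL hst
        simp_all
    have hcard : wt (a-1) m % 2 ≠ wt (a-1) m' % 2 := by
      unfold wt
      -- one contains t, the other doesn't
      cases h1 : m.testBit t <;> cases h2 : m'.testBit t
      · rw [h1, h2] at ht; exact absurd rfl ht
      · have htm : t ∉ (Finset.range (a-1)).filter (fun s => m.testBit s) := by simp [h1]
        have htm' : t ∈ (Finset.range (a-1)).filter (fun s => m'.testBit s) := by simp [h2, htL]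
        have e1 : ((Finset.range (a-1)).filter (fun s => m.testBit s)).erase t
            = (Finset.range (a-1)).filter (fun s => m.testBit s) := erase_eq_of_notMem htm
        have e2 := card_erase_of_mem htm'
        rw [herase] at e1
        have e1' := congrArg Finset.card e1
        have hpos : 0 < #(filter (fun s => m'.testBit s = true) (range (a - 1))) :=
          card_pos.mpr ⟨t, htm'⟩
        omega
      · have htm : t ∈ (Finset.range (a-1)).filter (fun s => m.testBit s) := by simp [h1, htL]
        have htm' : t ∉ (Finset.range (a-1)).filter (fun s => m'.testBit s) := by simp [h2]
        have e1 : ((Finset.range (a-1)).filter (fun s => m'.testBit s)).erase t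
            = (Finset.range (a-1)).filter (fun s => m'.testBit s) := erase_eq_of_notMem htm'
        have e2 := card_erase_of_mem htm
        rw [← herase] at e1
        have e1' := congrArg Finset.card e1
        have hpos : 0 < #(filter (fun s => m.testBit s = true) (range (a - 1))) :=
          card_pos.mpr ⟨t, htm⟩
        omega
      · rw [h1, h2] at ht; exact absurd rfl ht
    refine ⟨t, a-1, by omega, by omega, by omega, hvt, ?_⟩
    rw [vec_par, vec_par]
    rcases Nat.mod_two_eq_zero_or_one (wt (a-1) m) with h1 | h1 <;>
      rcases Nat.mod_two_eq_zero_or_one (wt (a-1) m') with h2 | h2 <;> simp_all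

/-- L2: every nonzero `m < 2^(a-1)` has at least two coordinates equal to 1. -/
lemma existsOne {a m : ℕ} (ha : 4 ≤ a) (h1 : 1 ≤ m) (h2 : m < 2^(a-1)) (i : ℕ) :
    ∃ j, j < a ∧ j ≠ i ∧ vec a m j = 1 := by
  have hex : ∃ k, m.testBit k = true := by
    by_contra h
    push_neg at h
    have : m = 0 := Nat.eq_of_testBit_eq (fun k => by simp [h k])
    omega
  obtain ⟨k, hk⟩ := hex
  have hkL : k < a - 1 := by
    by_contra hge
    push_neg at hge
    rw [Nat.testBit_lt_two_pow (lt_of_lt_of_le h2 (Nat.pow_le_pow_right (by norm_num) hge))] at hk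
    exact Bool.false_ne_true hk
  -- find two coordinates with value 1
  have htwo : ∃ j j', j < a ∧ j' < a ∧ j ≠ j' ∧ vec a m j = 1 ∧ vec a m j' = 1 := by
    by_cases hp : wt (a-1) m % 2 = 1
    · exact ⟨k, a-1, by omega, by omega, by omega, by rw [vec_data hkL, hk]; rfl,
        by rw [vec_par, if_pos hp]⟩
    · have hk' : k ∈ (Finset.range (a-1)).filter (fun t => m.testBit t) := by simp [hk, hkL]
      have hcard : 2 ≤ wt (a-1) m := by
        have h1' : 1 ≤ wt (a-1) m := card_pos.mpr ⟨k, hk'⟩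
        unfold wt at *
        omega
      obtain ⟨x, hx, y, hy, hxy⟩ := Finset.one_lt_card.mp hcard
      simp only [mem_filter, mem_range] at hx hy
      exact ⟨x, y, by omega, by omega, hxy, by rw [vec_data hx.1, hx.2]; rfl,
        by rw [vec_data hy.1, hy.2]; rfl⟩
  obtain ⟨j, j', hj, hj', hne, hv, hv'⟩ := htwo
  rcases eq_or_ne j i with rfl | h
  · exact ⟨j', hj', by omega, hv'⟩
  · exact ⟨j, hj, h, hv⟩

/-- L3: separation. -/
lemma sep {a N : ℕ} (ha : 4 ≤ a) (hN : 2^(a-2) - 1 ≤ N) {i j : ℕ}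
    (hi : i < a) (hj : j < a) (hij : i ≠ j) :
    ∃ m, 1 ≤ m ∧ m ≤ N ∧ vec a m i ≠ vec a m j := by
  have hN3 : 3 ≤ N := by
    have : 4 ≤ 2^(a-2) := by
      calc (4:ℕ) = 2^2 := rfl
      _ ≤ 2^(a-2) := Nat.pow_le_pow_right (by norm_num) (by omega)
    omega
  -- wlog i < j
  wlog hlt : i < j generalizing i j
  · obtain ⟨m, h1, h2, h3⟩ := this hj hi hij.symm (by omega)
    exact ⟨m, h1, h2, h3.symm⟩
  rcases lt_or_ge j (a-1) with hjd | hjd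
  -- both data coordinates: use m = 2^i
  · refine ⟨2^i, Nat.one_le_two_pow, ?_, ?_⟩
    · calc 2^i ≤ 2^(a-3) := Nat.pow_le_pow_right (by norm_num) (by omega)
      _ ≤ 2^(a-2) - 1 := by
          have : 2 * 2^(a-3) = 2^(a-2) := by
            rw [← pow_succ']
            congr 1
            omega
          have h1 : 1 ≤ 2^(a-3) := Nat.one_le_two_pow
          omega
      _ ≤ N := hN
    · rw [vec_data (by omega), vec_data hjd, Nat.testBit_two_pow_self,
        Nat.testBit_two_pow_of_ne hij]
      simp
  -- j = a-1 (parity coordinate)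
  · have hja : j = a - 1 := by omega
    subst hja
    rcases Nat.eq_zero_or_pos i with rfl | hipos
    · -- i = 0 : m = 3 = 2^0 + 2^1
      refine ⟨3, by omega, by omega, ?_⟩
      have h3 : (3:ℕ) = 2^0 + 2^1 := by norm_num
      rw [vec_data (by omega), vec_par, h3, wt_two_pow_add (by norm_num) (by omega),
        testBit_two_pow_add' (by norm_num)]
      norm_num
    · rcases eq_or_ne i (a-2) with rfl | hia2
      · -- m = 1
        refine ⟨1, le_refl _, by omega, ?_⟩
        have hw : wt (a-1) 1 = 1 := by
          have := wt_two_pow (L := a-1) (i := 0) (by omega)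
          simpa using this
        have hb : Nat.testBit 1 (a-2) = false := by
          apply Nat.testBit_lt_two_pow
          calc (1:ℕ) < 4 := by norm_num
          _ ≤ 2^(a-2) := by
            calc (4:ℕ) = 2^2 := rfl
            _ ≤ 2^(a-2) := Nat.pow_le_pow_right (by norm_num) (by omega)
        rw [vec_data (by omega), vec_par, hw, hb]
        norm_num
      · -- 1 ≤ i ≤ a-3 : m = 2^i + 1 = 2^0 + 2^i
        refine ⟨2^0 + 2^i, le_trans Nat.one_le_two_pow (Nat.le_add_right _ _), ?_, ?_⟩
        · have hile : i ≤ a - 3 := by omega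
          have hle : (2:ℕ)^i ≤ 2^(a-3) := Nat.pow_le_pow_right (by norm_num) hile
          calc 2^0 + 2^i ≤ 1 + 2^(a-3) := by
                simp only [pow_zero]
                omega
          _ ≤ 2^(a-2) - 1 := by
              have : 2 * 2^(a-3) = 2^(a-2) := by
                rw [← pow_succ']
                congr 1
                omega
              have h1 : 2 ≤ 2^(a-3) := by
                calc (2:ℕ) = 2^1 := rfl
                _ ≤ 2^(a-3) := Nat.pow_le_pow_right (by norm_num) (by omega)
              omega
          _ ≤ N := hN
        · rw [vec_data (by omega), vec_par, wt_two_pow_add (by omega) (by omega),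
            testBit_two_pow_add' (by omega)]
          simp [hipos.ne']

end Stmt2Aux

section Graph

open Finset SimpleGraph

namespace Stmt2Aux

variable {a n : ℕ}

/-- The graph: clique on `{x | x < a}` joined completely to the rest. -/
def gph (a n : ℕ) : SimpleGraph (Fin n) where
  Adj u v := u ≠ v ∧ (u.val < a ∨ v.val < a)
  symm := ⟨fun u v ⟨h1, h2⟩ => ⟨h1.symm, h2.symm⟩⟩
  loopless := ⟨fun u h => h.1 rfl⟩

instance : DecidableRel (gph a n).Adj :=
  fun u v => inferInstanceAs (Decidable (u ≠ v ∧ (u.val < a ∨ v.val < a)))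

lemma gph_adj {u v : Fin n} : (gph a n).Adj u v ↔ u ≠ v ∧ (u.val < a ∨ v.val < a) := Iff.rfl

/-- symmetric colour function -/
def cfun (a : ℕ) (u v : Fin n) : Fin 2 :=
  if u.val < a then (if v.val < a then 0 else vec a (v.val - a + 1) u.val)
  else (if v.val < a then vec a (u.val - a + 1) v.val else 0)

lemma cfun_symm (a : ℕ) (u v : Fin n) : cfun a u v = cfun a v u := by
  unfold cfun
  by_cases hu : u.val < a <;> by_cases hv : v.val < a <;> simp [hu, hv]

/-- the edge colouring -/
def col (a n : ℕ) : Sym2 (Fin n) → Fin 2 :=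
  Sym2.lift ⟨cfun a, cfun_symm a⟩

lemma col_mk (u v : Fin n) : col a n s(u, v) = cfun a u v := Sym2.lift_mk _ _ _

lemma cfun_AA {u v : Fin n} (hu : u.val < a) (hv : v.val < a) : cfun a u v = 0 := by
  simp [cfun, hu, hv]

lemma cfun_AB {u v : Fin n} (hu : u.val < a) (hv : ¬ v.val < a) :
    cfun a u v = vec a (v.val - a + 1) u.val := by
  simp [cfun, hu, hv]

lemma cfun_BA {u v : Fin n} (hu : ¬ u.val < a) (hv : v.val < a) :
    cfun a u v = vec a (u.val - a + 1) v.val := by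
  simp [cfun, hu, hv]

section Walks

variable {V : Type*} {G : SimpleGraph V}

lemma isPath_one {u v : V} (h : G.Adj u v) : (SimpleGraph.Walk.cons h SimpleGraph.Walk.nil).IsPath := by
  simp [SimpleGraph.Walk.isPath_def, h.ne]

lemma isPath_two {u w v : V} (h1 : G.Adj u w) (h2 : G.Adj w v) (huv : u ≠ v) :
    (SimpleGraph.Walk.cons h1 (SimpleGraph.Walk.cons h2 SimpleGraph.Walk.nil)).IsPath := by
  simp [SimpleGraph.Walk.isPath_def, h1.ne, h2.ne, huv]

lemma rainbow_one {α : Type*} (c : Sym2 V → α) {u v : V} (h : G.Adj u v) :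
    IsRainbowWalk c (SimpleGraph.Walk.cons h SimpleGraph.Walk.nil) := by
  simp [IsRainbowWalk]

lemma rainbow_two {α : Type*} (c : Sym2 V → α) {u w v : V} (h1 : G.Adj u w) (h2 : G.Adj w v)
    (hc : c s(u, w) ≠ c s(w, v)) :
    IsRainbowWalk c (SimpleGraph.Walk.cons h1 (SimpleGraph.Walk.cons h2 SimpleGraph.Walk.nil)) := by
  simp [IsRainbowWalk, hc]

end Walks

/-- the colouring works -/
lemma main_colouring (ha : 4 ≤ a) (h1 : 2 ^ (a - 2) + a - 1 ≤ n) (h2 : n ≤ 2 ^ (a - 1) + a - 1) :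
    RainbowTwoConnectedColouring (gph a n) (col a n) := by
  have ha4 : (4:ℕ) ≤ 2^(a-2) := by
    calc (4:ℕ) = 2^2 := rfl
    _ ≤ 2^(a-2) := Nat.pow_le_pow_right (by norm_num) (by omega)
  have hp2 : 2^(a-2) ≤ 2^(a-1) := Nat.pow_le_pow_right (by norm_num) (by omega)
  have han : a + 3 ≤ n := by omega
  have hNlow : 2^(a-2) - 1 ≤ n - a := by omega
  have hNhigh : n - a ≤ 2^(a-1) - 1 := by omega
  intro u v huv
  by_cases hu : u.val < a <;> by_cases hv : v.val < a
  · -- both in A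
    obtain ⟨m, hm1, hm2, hmv⟩ := sep ha hNlow hu hv (fun h => huv (Fin.ext h))
    have hbn : a + m - 1 < n := by omega
    set b : Fin n := ⟨a + m - 1, hbn⟩ with hb
    have hbval : ¬ b.val < a := by simp [hb]; omega
    have hmb : b.val - a + 1 = m := by simp [hb]; omega
    have hadjuv : (gph a n).Adj u v := ⟨huv, Or.inl hu⟩
    have hadjub : (gph a n).Adj u b := ⟨fun h => hbval (h ▸ hu), Or.inl hu⟩
    have hadjbv : (gph a n).Adj b v := ⟨fun h => hbval (h ▸ hv), Or.inr hv⟩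
    refine ⟨SimpleGraph.Walk.cons hadjuv SimpleGraph.Walk.nil,
      SimpleGraph.Walk.cons hadjub (SimpleGraph.Walk.cons hadjbv SimpleGraph.Walk.nil),
      isPath_one hadjuv, isPath_two hadjub hadjbv huv, ?_, rainbow_one _ hadjuv,
      rainbow_two _ hadjub hadjbv ?_, ?_⟩
    · intro h
      have := congrArg SimpleGraph.Walk.length h
      simp at this
    · rw [col_mk, col_mk, cfun_AB hu hbval, cfun_BA hbval hv, hmb]
      exact hmv
    · intro w hw _
      simp [SimpleGraph.Walk.support] at hw
      tauto
  · -- u ∈ A, v ∈ B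
    have hm1 : 1 ≤ v.val - a + 1 := by omega
    have hm2 : v.val - a + 1 < 2^(a-1) := by
      have := v.isLt; omega
    obtain ⟨j, hja, hji, hvec⟩ := existsOne ha hm1 hm2 u.val
    set w : Fin n := ⟨j, by omega⟩ with hwdef
    have hadjuv : (gph a n).Adj u v := ⟨huv, Or.inl hu⟩
    have hadjuw : (gph a n).Adj u w := ⟨fun h => hji (congrArg Fin.val h).symm, Or.inl hu⟩
    have hadjwv : (gph a n).Adj w v := ⟨fun h => hv (h ▸ hja), Or.inl hja⟩
    refine ⟨SimpleGraph.Walk.cons hadjuv SimpleGraph.Walk.nil,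
      SimpleGraph.Walk.cons hadjuw (SimpleGraph.Walk.cons hadjwv SimpleGraph.Walk.nil),
      isPath_one hadjuv, isPath_two hadjuw hadjwv huv, ?_, rainbow_one _ hadjuv,
      rainbow_two _ hadjuw hadjwv ?_, ?_⟩
    · intro h
      have := congrArg SimpleGraph.Walk.length h
      simp at this
    · rw [col_mk, col_mk, cfun_AA hu hja, cfun_AB hja hv]
      rw [hvec]
      exact (by decide : (0 : Fin 2) ≠ 1)
    · intro w hw _
      simp [SimpleGraph.Walk.support] at hw
      tauto
  · -- u ∈ B, v ∈ A
    have hm1 : 1 ≤ u.val - a + 1 := by omega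
    have hm2 : u.val - a + 1 < 2^(a-1) := by
      have := u.isLt; omega
    obtain ⟨j, hja, hji, hvec⟩ := existsOne ha hm1 hm2 v.val
    set w : Fin n := ⟨j, by omega⟩ with hwdef
    have hadjuv : (gph a n).Adj u v := ⟨huv, Or.inr hv⟩
    have hadjuw : (gph a n).Adj u w := ⟨fun h => hu (h.symm ▸ hja), Or.inr hja⟩
    have hadjwv : (gph a n).Adj w v := ⟨fun h => hji (congrArg Fin.val h), Or.inl hja⟩
    refine ⟨SimpleGraph.Walk.cons hadjuv SimpleGraph.Walk.nil,
      SimpleGraph.Walk.cons hadjuw (SimpleGraph.Walk.cons hadjwv SimpleGraph.Walk.nil),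
      isPath_one hadjuv, isPath_two hadjuw hadjwv huv, ?_, rainbow_one _ hadjuv,
      rainbow_two _ hadjuw hadjwv ?_, ?_⟩
    · intro h
      have := congrArg SimpleGraph.Walk.length h
      simp at this
    · rw [col_mk, col_mk, cfun_BA hu hja, cfun_AA hja hv]
      rw [hvec]
      exact (by decide : (1 : Fin 2) ≠ 0)
    · intro w hw _
      simp [SimpleGraph.Walk.support] at hw
      tauto
  · -- both in B
    have hm1u : 1 ≤ u.val - a + 1 := by omega
    have hm2u : u.val - a + 1 < 2^(a-1) := by have := u.isLt; omega
    have hm2v : v.val - a + 1 < 2^(a-1) := by have := v.isLt; omega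
    have hmne : u.val - a + 1 ≠ v.val - a + 1 := by
      intro h
      exact huv (Fin.ext (by omega))
    obtain ⟨i, j, hia, hja, hij, hvi, hvj⟩ := twoDiff ha hm2u hm2v hmne
    set wi : Fin n := ⟨i, by omega⟩ with hwi
    set wj : Fin n := ⟨j, by omega⟩ with hwj
    have hadjui : (gph a n).Adj u wi := ⟨fun h => hu (h ▸ hia), Or.inr hia⟩
    have hadjiv : (gph a n).Adj wi v := ⟨fun h => hv (h ▸ hia), Or.inl hia⟩
    have hadjuj : (gph a n).Adj u wj := ⟨fun h => hu (h ▸ hja), Or.inr hja⟩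
    have hadjjv : (gph a n).Adj wj v := ⟨fun h => hv (h ▸ hja), Or.inl hja⟩
    refine ⟨SimpleGraph.Walk.cons hadjui (SimpleGraph.Walk.cons hadjiv SimpleGraph.Walk.nil),
      SimpleGraph.Walk.cons hadjuj (SimpleGraph.Walk.cons hadjjv SimpleGraph.Walk.nil),
      isPath_two hadjui hadjiv huv, isPath_two hadjuj hadjjv huv, ?_, ?_, ?_, ?_⟩
    · intro h
      have := congrArg SimpleGraph.Walk.support h
      simp [SimpleGraph.Walk.support] at this
      exact hij (congrArg Fin.val this)
    · refine rainbow_two _ hadjui hadjiv ?_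
      rw [col_mk, col_mk, cfun_BA hu hia, cfun_AB hia hv]
      exact hvi
    · refine rainbow_two _ hadjuj hadjjv ?_
      rw [col_mk, col_mk, cfun_BA hu hja, cfun_AB hja hv]
      exact hvj
    · intro x hx hx'
      simp [SimpleGraph.Walk.support] at hx hx'
      rcases hx with rfl | rfl | rfl
      · exact Or.inl rfl
      · rcases hx' with h | h | h
        · exact absurd (congrArg Fin.val h) (by simp [hwi]; omega)
        · exact absurd (congrArg Fin.val h) (by simpa [hwi, hwj] using hij)
        · exfalso; apply hv; rw [← h]; exact hia
      · exact Or.inr rfl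

end Stmt2Aux

end Graph

section Part2

open Finset SimpleGraph

namespace Stmt2Aux

variable {a n : ℕ}

lemma filter_lt_eq (han : a < n) :
    (Finset.univ.filter (fun x : Fin n => x.val < a)) = Finset.Iio (⟨a, han⟩ : Fin n) := by
  ext x
  simp [Finset.mem_Iio, Fin.lt_def]

lemma card_filter_lt (han : a < n) :
    (Finset.univ.filter (fun x : Fin n => x.val < a)).card = a := by
  rw [filter_lt_eq han, Fin.card_Iio]

lemma degree_of_lt {u : Fin n} (hu : u.val < a) : (gph a n).degree u = n - 1 := by
  have : (gph a n).neighborFinset u = Finset.univ.erase u := by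
    ext v
    simp only [mem_neighborFinset, gph_adj, mem_erase, mem_univ, and_true]
    constructor
    · rintro ⟨h, _⟩; exact h.symm
    · intro h; exact ⟨h.symm, Or.inl hu⟩
  rw [SimpleGraph.degree, this, Finset.card_erase_of_mem (mem_univ u), card_univ,
    Fintype.card_fin]

lemma degree_of_ge (han : a < n) {u : Fin n} (hu : ¬ u.val < a) :
    (gph a n).degree u = a := by
  have : (gph a n).neighborFinset u = Finset.Iio (⟨a, han⟩ : Fin n) := by
    ext v
    simp only [mem_neighborFinset, gph_adj, Finset.mem_Iio, Fin.lt_def]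
    constructor
    · rintro ⟨_, h⟩
      rcases h with h | h
      · exact absurd h hu
      · exact h
    · intro h
      exact ⟨fun he => hu (he ▸ h), Or.inr h⟩
  rw [SimpleGraph.degree, this, Fin.card_Iio]

lemma edge_count (ha : 1 ≤ a) (han : a + 1 ≤ n) :
    (gph a n).edgeFinset.card = Nat.choose a 2 + a * (n - a) := by
  have hsum := SimpleGraph.sum_degrees_eq_twice_card_edges (gph a n)
  rw [← Finset.sum_filter_add_sum_filter_not Finset.univ (fun x : Fin n => x.val < a)] at hsum
  have e1 : ∑ v ∈ Finset.univ.filter (fun x : Fin n => x.val < a), (gph a n).degree v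
      = a * (n - 1) := by
    rw [Finset.sum_congr rfl (fun v hv => degree_of_lt (by simpa using hv)),
      Finset.sum_const, card_filter_lt (by omega), smul_eq_mul]
  have e2 : ∑ v ∈ Finset.univ.filter (fun x : Fin n => ¬ x.val < a), (gph a n).degree v
      = (n - a) * a := by
    rw [Finset.sum_congr rfl (fun v hv => degree_of_ge (by omega) (by simpa using hv)),
      Finset.sum_const, smul_eq_mul]
    congr 1
    rw [Finset.filter_not, Finset.card_sdiff_of_subset (Finset.filter_subset _ _), card_univ,
      Fintype.card_fin, card_filter_lt (by omega)]
  rw [e1, e2] at hsum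
  have h2c : 2 * Nat.choose a 2 = a * (a - 1) := by
    rw [Nat.choose_two_right, Nat.mul_div_cancel' (Nat.even_mul_pred_self a).two_dvd]
  have hsplit : a * (n - 1) = a * (a - 1) + a * (n - a) := by
    rw [← Nat.mul_add]
    congr 1
    omega
  have hcomm : (n - a) * a = a * (n - a) := Nat.mul_comm _ _
  omega

lemma two_connected (ha : 4 ≤ a) (han : a + 3 ≤ n) : TwoConnected (gph a n) := by
  constructor
  · rw [Fintype.card_fin]; omega
  · intro v
    rw [SimpleGraph.connected_iff]
    constructor
    · intro x y
      obtain ⟨k, hk, hkv, hkx, hky⟩ : ∃ k, k < a ∧ k ≠ v.val ∧ k ≠ (x : Fin n).val ∧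
          k ≠ (y : Fin n).val := by
        by_contra hcon
        push_neg at hcon
        have h0 := hcon 0 (by omega)
        have h1 := hcon 1 (by omega)
        have h2 := hcon 2 (by omega)
        have h3 := hcon 3 (by omega)
        omega
      have hzmem : (⟨k, by omega⟩ : Fin n) ∈ ({v}ᶜ : Set (Fin n)) := by
        simp only [Set.mem_compl_iff, Set.mem_singleton_iff]
        intro h
        exact hkv (congrArg Fin.val h)
      set z : ↥({v}ᶜ : Set (Fin n)) := ⟨⟨k, by omega⟩, hzmem⟩ with hz
      have hadj1 : ((gph a n).induce ({v}ᶜ : Set (Fin n))).Adj x z := by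
        show (gph a n).Adj (x : Fin n) (⟨k, by omega⟩ : Fin n)
        exact ⟨fun h => hkx (congrArg Fin.val h).symm, Or.inr hk⟩
      have hadj2 : ((gph a n).induce ({v}ᶜ : Set (Fin n))).Adj z y := by
        show (gph a n).Adj (⟨k, by omega⟩ : Fin n) (y : Fin n)
        exact ⟨fun h => hky (congrArg Fin.val h), Or.inl hk⟩
      exact ⟨SimpleGraph.Walk.cons hadj1 (SimpleGraph.Walk.cons hadj2 SimpleGraph.Walk.nil)⟩
    · have : Nontrivial (Fin n) := Fin.nontrivial_iff_two_le.mpr (by omega)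
      obtain ⟨x, hx⟩ := exists_ne v
      exact ⟨⟨x, by simpa using hx⟩⟩

/-- with a subsingleton colour set, a rainbow path between distinct vertices is a
single edge. -/
lemma single_edge {V α : Type*} {G : SimpleGraph V} {u v : V} (huv : u ≠ v)
    (c : Sym2 V → α) (hc : ∀ e e' : Sym2 V, c e = c e') (p : G.Walk u v)
    (hp : IsRainbowWalk c p) : ∃ h : G.Adj u v, p = SimpleGraph.Walk.cons h SimpleGraph.Walk.nil := by
  cases p with
  | nil => exact absurd rfl huv
  | cons h p' =>
    cases p' with
    | nil => exact ⟨h, rfl⟩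
    | @cons w w' _ h' p'' =>
      exfalso
      unfold IsRainbowWalk at hp
      simp only [SimpleGraph.Walk.edges_cons, List.map_cons, List.nodup_cons, List.mem_cons,
        List.mem_map, not_or] at hp
      exact hp.1.1 (hc _ _)

lemma rc2_lower (hn : 2 ≤ n) {r : ℕ} (hr : r < 2)
    (c : Sym2 (Fin n) → Fin r) : ¬ RainbowTwoConnectedColouring (gph a n) c := by
  intro hcol
  interval_cases r
  · exact (c s((⟨0, by omega⟩ : Fin n), (⟨0, by omega⟩ : Fin n))).elim0
  · have hne : (⟨0, by omega⟩ : Fin n) ≠ (⟨1, by omega⟩ : Fin n) := by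
      intro h
      exact absurd (congrArg Fin.val h) (by simp)
    obtain ⟨p, q, hp, hq, hpq, hrp, hrq, _⟩ := hcol _ _ hne
    have hc : ∀ e e' : Sym2 (Fin n), c e = c e' := fun e e' => Subsingleton.elim _ _
    obtain ⟨h, rfl⟩ := single_edge hne c hc p hrp
    obtain ⟨h', rfl⟩ := single_edge hne c hc q hrq
    exact hpq rfl

lemma rc2_eq_two (ha : 4 ≤ a) (h1 : 2 ^ (a - 2) + a - 1 ≤ n) (h2 : n ≤ 2 ^ (a - 1) + a - 1) :
    rc2 (gph a n) = 2 := by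
  have ha4 : (4:ℕ) ≤ 2^(a-2) := by
    calc (4:ℕ) = 2^2 := rfl
    _ ≤ 2^(a-2) := Nat.pow_le_pow_right (by norm_num) (by omega)
  have hn : 2 ≤ n := by omega
  have hmem : 2 ∈ {r : ℕ | ∃ col : Sym2 (Fin n) → Fin r,
      RainbowTwoConnectedColouring (gph a n) col} :=
    ⟨col a n, main_colouring ha h1 h2⟩
  refine le_antisymm (Nat.sInf_le hmem) (le_csInf ⟨2, hmem⟩ ?_)
  rintro b ⟨c, hc⟩
  by_contra hlt
  push_neg at hlt
  exact rc2_lower hn hlt c hc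

end Stmt2Aux

end Part2


/-- For every a ≥ 4 and 2^(a-2)+a-1 ≤ n ≤ 2^(a-1)+a-1 there is a
2-connected graph on n vertices (complete bipartite with classes A, B, |A| = a,
plus all edges inside A) with C(a,2) + a(n-a) edges and rc₂ = 2. -/
theorem stmt2 (a n : ℕ) (ha : 4 ≤ a)
    (h1 : 2 ^ (a - 2) + a - 1 ≤ n) (h2 : n ≤ 2 ^ (a - 1) + a - 1) :
    ∃ (G : SimpleGraph (Fin n)) (A : Finset (Fin n)), A.card = a ∧
      (∀ u v : Fin n, G.Adj u v ↔ u ≠ v ∧ (u ∈ A ∨ v ∈ A)) ∧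
      TwoConnected G ∧ G.edgeSet.ncard = Nat.choose a 2 + a * (n - a) ∧ rc2 G = 2 := by
  have ha4 : (4:ℕ) ≤ 2^(a-2) := by
    calc (4:ℕ) = 2^2 := rfl
    _ ≤ 2^(a-2) := Nat.pow_le_pow_right (by norm_num) (by omega)
  have han : a + 3 ≤ n := by omega
  refine ⟨Stmt2Aux.gph a n, Finset.Iio (⟨a, by omega⟩ : Fin n), ?_, ?_,
    Stmt2Aux.two_connected ha han, ?_, Stmt2Aux.rc2_eq_two ha h1 h2⟩
  · rw [Fin.card_Iio]
  · intro u v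
    rw [Stmt2Aux.gph_adj]
    simp [Finset.mem_Iio, Fin.lt_def]
  · rw [Set.ncard_eq_toFinset_card', ← SimpleGraph.edgeFinset,
      Stmt2Aux.edge_count (by omega) (by omega)]
end

section
/- Let 5 ≤ r ≤ n − 1 and n > r(r−1)/6. If G is a 2-connected graph on n vertices with rc₂(G) ≤ r, then |E(G)| ≥ (6/5)·n − r(r−1)/5. Consequently t₂(n,r) ≥ (6/5)·n − r(r−1)/5. -/
open SimpleGraph

variable {V : Type*} {G : SimpleGraph V}

/-- `u`'s neighbours are exactly `{a, b}`. -/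
def TwoNbrs (G : SimpleGraph V) (a u b : V) : Prop :=
  G.Adj u a ∧ G.Adj u b ∧ a ≠ b ∧ ∀ m, G.Adj u m → m = a ∨ m = b

lemma loop_path_eq_nil {v : V} (p : G.Walk v v) (hp : p.IsPath) : p = Walk.nil := by
  cases p with
  | nil => rfl
  | cons h q =>
    rw [Walk.cons_isPath_iff] at hp
    exact absurd q.end_mem_support hp.2

lemma rainbow_ne {α : Type*} {col : Sym2 V → α} {u v : V} {P : G.Walk u v}
    (hr : IsRainbowWalk col P) {e f : Sym2 V} (he : e ∈ P.edges) (hf : f ∈ P.edges)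
    (hef : e ≠ f) : col e ≠ col f :=
  fun hc => hef (List.inj_on_of_nodup_map hr he hf hc)

lemma exists_last_edge {x v : V} (p : G.Walk x v) (hxv : x ≠ v) :
    ∃ m, G.Adj v m ∧ s(v, m) ∈ p.edges := by
  obtain ⟨m, h, q, hq⟩ := Walk.exists_eq_cons_of_ne (Ne.symm hxv) p.reverse
  refine ⟨m, h, ?_⟩
  have : s(v, m) ∈ p.reverse.edges := by rw [hq]; simp
  rwa [Walk.edges_reverse, List.mem_reverse] at this

lemma exists_startingWith {x y w v : V} (htwo : TwoNbrs G y x w)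
    (hxv : x ≠ v) (p q : G.Walk x v) (hp : p.IsPath) (hq : q.IsPath) (hne : p ≠ q)
    (hdisj : ∀ m, m ∈ p.support → m ∈ q.support → m = x ∨ m = v) :
    ∃ P : G.Walk x v, (P = p ∨ P = q) ∧ P.IsPath ∧
      ∃ (h : G.Adj x y) (P' : G.Walk y v), P = Walk.cons h P' := by
  obtain ⟨hxy, hxw, hyw, hall⟩ := htwo
  obtain ⟨m₁, h₁, p₁, rfl⟩ := Walk.exists_eq_cons_of_ne hxv p
  obtain ⟨m₂, h₂, q₁, rfl⟩ := Walk.exists_eq_cons_of_ne hxv q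
  rcases hall m₁ h₁ with h1 | h1
  · subst h1; exact ⟨_, Or.inl rfl, hp, h₁, p₁, rfl⟩
  · rcases hall m₂ h₂ with h2 | h2
    · subst h2; exact ⟨_, Or.inr rfl, hq, h₂, q₁, rfl⟩
    · exfalso
      have hmm : m₂ = m₁ := h2.trans h1.symm
      subst hmm
      by_cases hwv : m₂ = v
      · subst hwv
        have hp₁ : p₁ = Walk.nil := loop_path_eq_nil p₁ (by rw [Walk.cons_isPath_iff] at hp; exact hp.1)
        have hq₁ : q₁ = Walk.nil := loop_path_eq_nil q₁ (by rw [Walk.cons_isPath_iff] at hq; exact hq.1)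
        subst hp₁; subst hq₁
        exact hne rfl
      · have hw1 : m₂ ∈ (Walk.cons h₁ p₁).support := by
          simp [Walk.support_cons]
        have hw2 : m₂ ∈ (Walk.cons h₂ q₁).support := by
          simp [Walk.support_cons]
        rcases hdisj m₂ hw1 hw2 with h | h
        · exact G.ne_of_adj h₁ h.symm
        · exact hwv h

lemma force_step {x y z v : V} (htwo : TwoNbrs G x y z) (hyv : y ≠ v)
    (h : G.Adj x y) (P' : G.Walk y v) (hP : (Walk.cons h P').IsPath) :
    ∃ (h2 : G.Adj y z) (P'' : G.Walk z v), P' = Walk.cons h2 P'' := by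
  obtain ⟨hyx, hyz, hxz, hall⟩ := htwo
  obtain ⟨m, hm, P'', rfl⟩ := Walk.exists_eq_cons_of_ne hyv P'
  rcases hall m hm with rfl | rfl
  · exfalso
    rw [Walk.cons_isPath_iff] at hP
    exact hP.2 (by simp [Walk.support_cons])
  · exact ⟨hm, P'', rfl⟩

/-- Lemma A : consecutive edges around a "both endpoints have degree two" edge
have different colours. -/
lemma colA {α : Type*} {col : Sym2 V → α} (hcol : RainbowTwoConnectedColouring G col)
    {x y z w : V} (hx : TwoNbrs G y x w) (hy : TwoNbrs G x y z) :
    col s(x, y) ≠ col s(y, z) := by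
  have hxz : x ≠ z := hy.2.2.1
  obtain ⟨p, q, hp, hq, hne, hrp, hrq, hdisj⟩ := hcol x z hxz
  obtain ⟨P, hPor, hPpath, h, P₁, hPeq⟩ := exists_startingWith hx hxz p q hp hq hne hdisj
  have hrP : IsRainbowWalk col P := by rcases hPor with rfl | rfl <;> assumption
  subst hPeq
  have hyz : y ≠ z := G.ne_of_adj hy.2.1
  obtain ⟨h2, P₂, rfl⟩ := force_step hy hyz h P₁ hPpath
  refine rainbow_ne hrP (by simp) (by simp) ?_
  intro hEq
  rw [Sym2.eq_iff] at hEq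
  rcases hEq with ⟨h1, -⟩ | ⟨h1, -⟩
  · exact (G.ne_of_adj h) h1
  · exact hxz h1

/-- Lemma B : two distinct disjoint "interior" edges with same colour have
"next edges" of different colours. -/
lemma colBB {α : Type*} {col : Sym2 V → α} (hcol : RainbowTwoConnectedColouring G col)
    {x y z w x' y' z' w' : V}
    (hx : TwoNbrs G y x w) (hy : TwoNbrs G x y z)
    (hx' : TwoNbrs G y' x' w') (hy' : TwoNbrs G x' y' z')
    (hxx : x ≠ x') (hxy' : x ≠ y') (hyx' : y ≠ x') (hyy : y ≠ y')
    (hcc : col s(x, y) = col s(x', y')) :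
    col s(y, z) ≠ col s(y', z') := by
  intro hσ
  have hee' : s(x, y) ≠ (s(x', y') : Sym2 V) := by
    intro hEq; rw [Sym2.eq_iff] at hEq
    rcases hEq with ⟨h1, -⟩ | ⟨h1, -⟩
    · exact hxx h1
    · exact hxy' h1
  by_cases hcase : (s(y, z) : Sym2 V) = s(y', z')
  · -- here necessarily z = y' and z' = y
    rw [Sym2.eq_iff] at hcase
    rcases hcase with ⟨h1, h2⟩ | ⟨h1, h2⟩
    · exact hyy h1
    · subst h1
      have h2' := h2.symm
      subst h2'
      -- instance (x, x')
      obtain ⟨p, q, hp, hq, hne, hrp, hrq, hdisj⟩ := hcol x x' hxx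
      obtain ⟨P, hPor, hPpath, h, P₁, hPeq⟩ := exists_startingWith hx hxx p q hp hq hne hdisj
      have hrP : IsRainbowWalk col P := by rcases hPor with rfl | rfl <;> assumption
      subst hPeq
      obtain ⟨h2, P₂, rfl⟩ := force_step hy hyx' h P₁ hPpath
      -- P₂ : Walk y' x'
      have hy'x' : y' ≠ x' := (G.ne_of_adj hy'.1)
      obtain ⟨m, hm, P₃, rfl⟩ := Walk.exists_eq_cons_of_ne hy'x' P₂
      rcases hy'.2.2.2 m hm with hmx | hmz
      · have hmx' := hmx.symm
        subst hmx'
        have hne2 : s(x, y) ≠ (s(y', x') : Sym2 V) := by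
          intro hEq; rw [Sym2.eq_iff] at hEq
          rcases hEq with ⟨h1, -⟩ | ⟨h1, -⟩
          · exact hxy' h1
          · exact hxx h1
        refine rainbow_ne hrP (by simp) (by simp) hne2 ?_
        rw [hcc, Sym2.eq_swap]
      · have hmy := hmz.symm
        subst hmy
        rw [Walk.cons_isPath_iff, Walk.cons_isPath_iff] at hPpath
        exact hPpath.1.2 (by simp [Walk.support_cons])
  · -- instance (x, y')
    obtain ⟨p, q, hp, hq, hne, hrp, hrq, hdisj⟩ := hcol x y' hxy'
    obtain ⟨P, hPor, hPpath, h, P₁, hPeq⟩ := exists_startingWith hx hxy' p q hp hq hne hdisj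
    have hrP : IsRainbowWalk col P := by rcases hPor with rfl | rfl <;> assumption
    subst hPeq
    obtain ⟨h2, P₂, rfl⟩ := force_step hy hyy h P₁ hPpath
    obtain ⟨m, hm, hmem⟩ := exists_last_edge _ hxy'
    rcases hy'.2.2.2 m hm with hmx | hmz
    · have hmx' := hmx.symm
      subst hmx'
      have hne2 : s(x, y) ≠ (s(y', x') : Sym2 V) := by
        intro hEq; rw [Sym2.eq_iff] at hEq
        rcases hEq with ⟨h1, -⟩ | ⟨h1, -⟩
        · exact hxy' h1
        · exact hxx h1
      exact rainbow_ne hrP (by simp) hmem hne2 (by rw [hcc, Sym2.eq_swap])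
    · have hmz' := hmz.symm
      subst hmz'
      have hne2 : (s(y, z) : Sym2 V) ≠ s(y', z') := hcase
      exact rainbow_ne hrP (by simp) hmem hne2 hσ


section fin
variable [Fintype V]

lemma exists_two_other (hG : 3 ≤ Fintype.card V) (v : V) :
    ∃ x y : V, x ≠ y ∧ x ≠ v ∧ y ≠ v := by
  classical
  have hcard : 1 < (Finset.univ.erase v).card := by
    have h1 := Finset.card_erase_of_mem (Finset.mem_univ v)
    have h2 : Finset.univ.card = Fintype.card V := rfl
    omega
  obtain ⟨x, hx, y, hy, hxy⟩ := Finset.one_lt_card.mp hcard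
  exact ⟨x, y, hxy, Finset.ne_of_mem_erase hx, Finset.ne_of_mem_erase hy⟩

lemma TwoConnected.two_le_degree [DecidableRel G.Adj] (hG : TwoConnected G) (v : V) :
    2 ≤ G.degree v := by
  by_contra hdeg
  push_neg at hdeg
  have huniq : ∀ a ∈ G.neighborFinset v, ∀ b ∈ G.neighborFinset v, a = b := by
    apply Finset.card_le_one.mp
    have : G.degree v = (G.neighborFinset v).card := rfl
    omega
  obtain ⟨x, y, hxy, hxv, hyv⟩ := exists_two_other hG.1 v
  -- choose the vertex to delete
  obtain ⟨w, hvw, hadjw, t, htv, htw⟩ :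
      ∃ w, v ≠ w ∧ (∀ m, G.Adj v m → m = w) ∧ ∃ t, t ≠ v ∧ t ≠ w := by
    by_cases hnb : ∃ a, G.Adj v a
    · obtain ⟨a, ha⟩ := hnb
      refine ⟨a, G.ne_of_adj ha, ?_, ?_⟩
      · intro m hm
        exact huniq m (by rwa [SimpleGraph.mem_neighborFinset]) a
          (by rwa [SimpleGraph.mem_neighborFinset])
      · by_cases hxa : x = a
        · exact ⟨y, hyv, fun h => hxy (hxa ▸ h ▸ rfl)⟩
        · exact ⟨x, hxv, hxa⟩
    · push_neg at hnb
      refine ⟨x, Ne.symm hxv, ?_, y, hyv, hxy.symm⟩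
      intro m hm
      exact absurd hm (hnb m)
  have hconn := hG.2 w
  have hv' : v ∈ ({w}ᶜ : Set V) := by simpa using hvw
  have ht' : t ∈ ({w}ᶜ : Set V) := by simpa using htw
  have hreach := hconn.preconnected ⟨v, hv'⟩ ⟨t, ht'⟩
  obtain ⟨W⟩ := hreach
  have hne : (⟨v, hv'⟩ : ({w}ᶜ : Set V)) ≠ ⟨t, ht'⟩ := by
    simp [Subtype.ext_iff]; exact fun h => htv h.symm
  obtain ⟨m, hm, W', hWeq⟩ := Walk.exists_eq_cons_of_ne hne W
  have hadj : G.Adj v ↑m := hm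
  have := hadjw _ hadj
  exact m.2 (by simp [this])

lemma TwoConnected.connected (hG : TwoConnected G) : G.Connected := by
  classical
  have hpos : 0 < Fintype.card V := by have := hG.1; omega
  have hne : Nonempty V := Fintype.card_pos_iff.mp hpos
  haveI : Nonempty V := hne
  refine ⟨fun u w => ?_⟩
  by_cases huw : u = w
  · subst huw; exact Reachable.refl u
  · obtain ⟨x, y, hxy, hxu, hyu⟩ := exists_two_other hG.1 u
    -- pick v distinct from u and w
    obtain ⟨v, hvu, hvw⟩ : ∃ v, v ≠ u ∧ v ≠ w := by
      by_cases hxw : x = w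
      · refine ⟨y, hyu, ?_⟩
        intro h; rw [← hxw] at h; exact hxy h.symm
      · exact ⟨x, hxu, hxw⟩
    have hconn := hG.2 v
    have hu' : u ∈ ({v}ᶜ : Set V) := by simpa using fun h => hvu h.symm
    have hw' : w ∈ ({v}ᶜ : Set V) := by simpa using fun h => hvw h.symm
    have hreach := hconn.preconnected ⟨u, hu'⟩ ⟨w, hw'⟩
    exact hreach.map (SimpleGraph.Embedding.induce ({v}ᶜ : Set V)).toHom

end fin

lemma lasthit {u v : V} (R : G.Walk u v) (S : V → Prop) :
    (∃ z, S z ∧ ∃ R₂ : G.Walk z v, R₂.support ⊆ R.support ∧ ∀ m ∈ R₂.support.tail, ¬ S m)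
    ∨ (∀ m ∈ R.support, ¬ S m) := by
  induction R with
  | nil =>
    rename_i a
    by_cases h : S a
    · exact Or.inl ⟨a, h, Walk.nil, by simp, by simp⟩
    · refine Or.inr ?_
      intro m hm
      simp only [Walk.support_nil, List.mem_singleton] at hm
      rwa [hm]
  | @cons a b c hadj R' ih =>
    rcases ih with ⟨z, hz, R₂, hsub, htail⟩ | hall
    · refine Or.inl ⟨z, hz, R₂, ?_, htail⟩
      intro m hm
      have := hsub hm
      rw [Walk.support_cons]
      exact List.mem_cons_of_mem _ this
    · by_cases h : S a
      · refine Or.inl ⟨a, h, Walk.cons hadj R', fun _ hh => hh, ?_⟩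
        intro m hm
        rw [Walk.support_cons, List.tail_cons] at hm
        exact hall m hm
      · refine Or.inr ?_
        intro m hm
        rw [Walk.support_cons] at hm
        rcases List.mem_cons.mp hm with hm' | hm'
        · rwa [hm']
        · exact hall m hm'

lemma end_not_mem_takeUntil [DecidableEq V] {u w t : V} (P : G.Walk u w) (hP : P.IsPath)
    (ht : t ∈ P.support) (htw : t ≠ w) : w ∉ (P.takeUntil t ht).support := by
  intro hmem
  have hspec := P.take_spec ht
  have hnodup : P.support.Nodup := (Walk.isPath_def _).mp hP
  rw [← hspec, Walk.support_append] at hnodup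
  have hdrop : w ∈ (P.dropUntil t ht).support.tail := by
    have hw : w ∈ (P.dropUntil t ht).support := Walk.end_mem_support _
    rw [Walk.support_eq_cons (P.dropUntil t ht)] at hw
    rcases List.mem_cons.mp hw with hh | hh
    · exact absurd hh.symm htw
    · exact hh
  rw [List.nodup_append] at hnodup
  exact hnodup.2.2 w hmem w hdrop rfl



lemma isPath_concat_end {u w v : V} (Q : G.Walk u w) (hQ : Q.IsPath) (hwv : G.Adj w v)
    (hvQ : v ∉ Q.support) : (Q.append (Walk.cons hwv Walk.nil)).IsPath ∧
      (Q.append (Walk.cons hwv Walk.nil)).support = Q.support ++ [v] := by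
  have hsup : (Q.append (Walk.cons hwv Walk.nil)).support = Q.support ++ [v] := by
    rw [Walk.support_append]; simp
  refine ⟨?_, hsup⟩
  rw [Walk.isPath_def, hsup, List.nodup_append]
  refine ⟨(Walk.isPath_def _).mp hQ, List.nodup_singleton v, ?_⟩
  intro m hm b hm' hmb
  rw [List.mem_singleton] at hm'
  subst hm'; subst hmb
  exact hvQ hm

lemma helper_alpha [DecidableEq V] {u w v : V} (P Q : G.Walk u w) (hP : P.IsPath) (hQ : Q.IsPath)
    (hdisj : ∀ m ∈ P.support, m ∈ Q.support → m = u ∨ m = w)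
    (hwv : G.Adj w v) (hvu : v ≠ u) (hvw : v ≠ w) (hvP : v ∈ P.support) :
    ∃ p q : G.Walk u v, p.IsPath ∧ q.IsPath ∧ p ≠ q ∧
      ∀ m ∈ p.support, m ∈ q.support → m = u ∨ m = v := by
  have hvQ : v ∉ Q.support := fun hvQ => by
    rcases hdisj v hvP hvQ with h | h
    · exact hvu h
    · exact hvw h
  obtain ⟨hqpath, hqsup⟩ := isPath_concat_end Q hQ hwv hvQ
  have hwp : w ∉ (P.takeUntil v hvP).support := end_not_mem_takeUntil P hP hvP hvw
  refine ⟨P.takeUntil v hvP, Q.append (Walk.cons hwv Walk.nil), hP.takeUntil hvP, hqpath, ?_, ?_⟩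
  · intro heq
    have hwq : w ∈ (Q.append (Walk.cons hwv Walk.nil)).support := by
      rw [hqsup]; exact List.mem_append_left _ (Walk.end_mem_support Q)
    rw [← heq] at hwq
    exact hwp hwq
  · intro m hmp hmq
    rw [hqsup] at hmq
    rcases List.mem_append.mp hmq with hm | hm
    · have hmP : m ∈ P.support := Walk.support_takeUntil_subset _ _ hmp
      rcases hdisj m hmP hm with h | h
      · exact Or.inl h
      · exact absurd (h ▸ hmp) hwp
    · rw [List.mem_singleton] at hm; exact Or.inr hm

lemma helper_beta [DecidableEq V] {u w v z : V} (P Q : G.Walk u w) (hP : P.IsPath) (hQ : Q.IsPath)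
    (hdisj : ∀ m ∈ P.support, m ∈ Q.support → m = u ∨ m = w)
    (hwv : G.Adj w v) (hvu : v ≠ u) (hvw : v ≠ w)
    (hvP : v ∉ P.support) (hvQ : v ∉ Q.support)
    (R₃ : G.Walk z v) (hR₃ : R₃.IsPath) (hzP : z ∈ P.support) (hwR : w ∉ R₃.support)
    (htail : ∀ m ∈ R₃.support.tail, m ∉ P.support ∧ m ∉ Q.support) :
    ∃ p q : G.Walk u v, p.IsPath ∧ q.IsPath ∧ p ≠ q ∧
      ∀ m ∈ p.support, m ∈ q.support → m = u ∨ m = v := by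
  obtain ⟨hqpath, hqsup⟩ := isPath_concat_end Q hQ hwv hvQ
  have hzw : z ≠ w := fun h => hwR (h ▸ Walk.start_mem_support R₃)
  have hwtake : w ∉ (P.takeUntil z hzP).support := end_not_mem_takeUntil P hP hzP hzw
  have hpsup : ((P.takeUntil z hzP).append R₃).support
      = (P.takeUntil z hzP).support ++ R₃.support.tail := Walk.support_append _ _
  have hppath : ((P.takeUntil z hzP).append R₃).IsPath := by
    rw [Walk.isPath_def, hpsup, List.nodup_append]
    refine ⟨(Walk.isPath_def _).mp (hP.takeUntil hzP), ?_, ?_⟩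
    · have hnd := (Walk.isPath_def _).mp hR₃
      rw [Walk.support_eq_cons R₃] at hnd
      exact (List.nodup_cons.mp hnd).2
    · intro m hm1 b hm2 hmb
      subst hmb
      exact (htail m hm2).1 (Walk.support_takeUntil_subset _ _ hm1)
  have hwq : w ∈ (Q.append (Walk.cons hwv Walk.nil)).support := by
    rw [hqsup]; exact List.mem_append_left _ (Walk.end_mem_support Q)
  have hwp : w ∉ ((P.takeUntil z hzP).append R₃).support := by
    rw [hpsup]
    intro hm
    rcases List.mem_append.mp hm with hm | hm
    · exact hwtake hm
    · apply hwR
      rw [Walk.support_eq_cons R₃]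
      exact List.mem_cons_of_mem _ hm
  refine ⟨(P.takeUntil z hzP).append R₃, Q.append (Walk.cons hwv Walk.nil), hppath, hqpath, ?_, ?_⟩
  · intro heq
    rw [← heq] at hwq
    exact hwp hwq
  · intro m hmp hmq
    rw [hqsup] at hmq
    rcases List.mem_append.mp hmq with hmQ | hmv
    · rw [hpsup] at hmp
      rcases List.mem_append.mp hmp with hm1 | hm1
      · have hmP := Walk.support_takeUntil_subset _ _ hm1
        rcases hdisj m hmP hmQ with h | h
        · exact Or.inl h
        · exact absurd (h ▸ hm1) hwtake
      · exact absurd hmQ (htail m hm1).2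
    · rw [List.mem_singleton] at hmv; exact Or.inr hmv

lemma TwoConnected.base_adj [Fintype V] (hG : TwoConnected G) {u v : V} (h : G.Adj u v) :
    ∃ p q : G.Walk u v, p.IsPath ∧ q.IsPath ∧ p ≠ q ∧
      ∀ m ∈ p.support, m ∈ q.support → m = u ∨ m = v := by
  classical
  obtain ⟨a, ha, hav⟩ : ∃ a, G.Adj u a ∧ a ≠ v := by
    by_contra hcon
    push_neg at hcon
    have hsub : G.neighborFinset u ⊆ {v} := by
      intro m hm
      rw [SimpleGraph.mem_neighborFinset] at hm
      simp [hcon m hm]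
    have hle := Finset.card_le_card hsub
    have hdeg := hG.two_le_degree u
    have hh : G.degree u = (G.neighborFinset u).card := rfl
    simp only [Finset.card_singleton] at hle
    omega
  have hconn := hG.2 u
  have hau : a ∈ ({u}ᶜ : Set V) := by simpa using (G.ne_of_adj ha).symm
  have hvu' : v ∈ ({u}ᶜ : Set V) := by simpa using (G.ne_of_adj h).symm
  obtain ⟨W₀⟩ := hconn.preconnected ⟨a, hau⟩ ⟨v, hvu'⟩
  set W := W₀.map (SimpleGraph.Embedding.induce ({u}ᶜ : Set V)).toHom with hWdef
  have hWu : u ∉ W.support := by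
    intro hu
    rw [hWdef, Walk.support_map] at hu
    obtain ⟨m, hm, hmu⟩ := List.mem_map.mp hu
    have hval : (m : V) = u := hmu
    exact absurd hval (Set.mem_compl_singleton_iff.mp m.2)
  have hW'path : W.bypass.IsPath := Walk.bypass_isPath W
  have hW'u : u ∉ W.bypass.support := fun hh => hWu (Walk.support_bypass_subset _ hh)
  refine ⟨Walk.cons h Walk.nil, Walk.cons ha W.bypass, ?_, hW'path.cons hW'u, ?_, ?_⟩
  · rw [Walk.cons_isPath_iff]
    exact ⟨Walk.IsPath.nil, by simp [G.ne_of_adj h]⟩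
  · intro heq
    have hmem : s(u, v) ∈ (Walk.cons h Walk.nil).edges := by simp
    rw [heq] at hmem; replace hmem : s(u, v) ∈ s(u, a) :: W.bypass.edges := hmem
    rcases List.mem_cons.mp hmem with hm | hm
    · rw [Sym2.eq_iff] at hm
      rcases hm with ⟨-, h2⟩ | ⟨h1, -⟩
      · exact hav h2.symm
      · exact (G.ne_of_adj ha) h1
    · exact hW'u (Walk.fst_mem_support_of_mem_edges _ hm)
  · intro m hm _
    simp only [Walk.support_cons, Walk.support_nil] at hm
    rcases List.mem_cons.mp hm with hm | hm
    · exact Or.inl hm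
    · rw [List.mem_singleton] at hm; exact Or.inr hm

theorem TwoConnected.two_paths [Fintype V] (hG : TwoConnected G) :
    ∀ u v : V, u ≠ v → ∃ p q : G.Walk u v, p.IsPath ∧ q.IsPath ∧ p ≠ q ∧
      ∀ m ∈ p.support, m ∈ q.support → m = u ∨ m = v := by
  classical
  have hconn := hG.connected
  suffices H : ∀ k (u v : V), G.dist u v ≤ k → u ≠ v → ∃ p q : G.Walk u v,
      p.IsPath ∧ q.IsPath ∧ p ≠ q ∧
      ∀ m ∈ p.support, m ∈ q.support → m = u ∨ m = v by
    intro u v huv; exact H (G.dist u v) u v le_rfl huv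
  intro k
  induction k with
  | zero =>
    intro u v hd huv
    have := hconn.pos_dist_of_ne huv
    omega
  | succ k ih =>
    intro u v hd huv
    by_cases hdk : G.dist u v ≤ k
    · exact ih u v hdk huv
    push_neg at hdk
    have hdist : G.dist u v = k + 1 := le_antisymm hd hdk
    by_cases hk0 : k = 0
    · subst hk0
      exact hG.base_adj (SimpleGraph.dist_eq_one_iff_adj.mp hdist)
    · have hd0 : G.dist u v ≠ 0 := by omega
      obtain ⟨W₀, hW₀len⟩ := SimpleGraph.exists_walk_of_dist_ne_zero hd0
      have hW₀path : W₀.IsPath := Walk.isPath_of_length_eq_dist W₀ hW₀len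
      obtain ⟨w, hvw, pr₁, hrev⟩ := Walk.exists_eq_cons_of_ne huv.symm W₀.reverse
      have hP₁len : pr₁.reverse.length = k := by
        have h1 : W₀.reverse.length = W₀.length := Walk.length_reverse _
        rw [hrev, Walk.length_cons, hW₀len, hdist] at h1
        rw [Walk.length_reverse]
        omega
      have hrevpath := hW₀path.reverse
      rw [hrev, Walk.cons_isPath_iff] at hrevpath
      have hP₁path : pr₁.reverse.IsPath := hrevpath.1.reverse
      have hvP₁ : v ∉ pr₁.reverse.support := by
        rw [Walk.support_reverse]
        intro hv
        exact hrevpath.2 (by rwa [List.mem_reverse] at hv)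
      have hwv : G.Adj w v := hvw.symm
      have hdistuw : G.dist u w ≤ k := le_trans (SimpleGraph.dist_le pr₁.reverse) (by rw [hP₁len])
      have huw : u ≠ w := by
        intro heq
        subst heq
        have hle : G.dist u v ≤ 1 := by
          have := SimpleGraph.dist_le (Walk.cons hwv Walk.nil)
          simpa using this
        omega
      obtain ⟨P, Q, hP, hQ, hPQ, hdisjPQ⟩ := ih u w hdistuw huw
      have hconn2 := hG.2 w
      have hu' : u ∈ ({w}ᶜ : Set V) := by simpa using huw
      have hv' : v ∈ ({w}ᶜ : Set V) := by simpa using (G.ne_of_adj hvw)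
      obtain ⟨R₀⟩ := hconn2.preconnected ⟨u, hu'⟩ ⟨v, hv'⟩
      set R := R₀.map (SimpleGraph.Embedding.induce ({w}ᶜ : Set V)).toHom with hRdef
      have hwR : w ∉ R.support := by
        intro hu
        rw [hRdef, Walk.support_map] at hu
        obtain ⟨m, hm, hmu⟩ := List.mem_map.mp hu
        have hval : (m : V) = w := hmu
        exact absurd hval (Set.mem_compl_singleton_iff.mp m.2)
      by_cases hvPQ : v ∈ P.support ∨ v ∈ Q.support
      · rcases hvPQ with hvP | hvQ
        · exact helper_alpha P Q hP hQ hdisjPQ hwv huv.symm (G.ne_of_adj hvw) hvP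
        · exact helper_alpha Q P hQ hP (fun m hm hm' => hdisjPQ m hm' hm) hwv huv.symm
            (G.ne_of_adj hvw) hvQ
      · push_neg at hvPQ
        obtain ⟨hvP, hvQ⟩ := hvPQ
        have hS : (fun m => m ∈ P.support ∨ m ∈ Q.support) u := Or.inl (Walk.start_mem_support P)
        rcases lasthit R (fun m => m ∈ P.support ∨ m ∈ Q.support) with
          ⟨z, hz, R₂, hsub, htail⟩ | hall
        · have hR₃path : R₂.bypass.IsPath := Walk.bypass_isPath R₂
          have hR₃sub : R₂.bypass.support ⊆ R₂.support := Walk.support_bypass_subset _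
          have hwR₃ : w ∉ R₂.bypass.support := fun hh => hwR (hsub (hR₃sub hh))
          have htail₃ : ∀ m ∈ R₂.bypass.support.tail, m ∉ P.support ∧ m ∉ Q.support := by
            intro m hm
            have hmS : m ∈ R₂.bypass.support := by
              rw [Walk.support_eq_cons R₂.bypass]; exact List.mem_cons_of_mem _ hm
            have hmR₂ : m ∈ R₂.support := hR₃sub hmS
            rw [Walk.support_eq_cons R₂] at hmR₂
            rcases List.mem_cons.mp hmR₂ with hmz | hmt
            · exfalso
              have hnd : R₂.bypass.support.Nodup := (Walk.isPath_def _).mp hR₃path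
              rw [Walk.support_eq_cons R₂.bypass] at hnd
              exact (List.nodup_cons.mp hnd).1 (hmz ▸ hm)
            · have hns := htail m hmt
              exact ⟨fun hc => hns (Or.inl hc), fun hc => hns (Or.inr hc)⟩
          rcases hz with hzP | hzQ
          · exact helper_beta P Q hP hQ hdisjPQ hwv huv.symm (G.ne_of_adj hvw) hvP hvQ
              R₂.bypass hR₃path hzP hwR₃ htail₃
          · exact helper_beta Q P hQ hP (fun m hm hm' => hdisjPQ m hm' hm) hwv huv.symm
              (G.ne_of_adj hvw) hvQ hvP R₂.bypass hR₃path hzQ hwR₃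
              (fun m hm => ⟨(htail₃ m hm).2, (htail₃ m hm).1⟩)
        · exact absurd hS (hall u (Walk.start_mem_support R))

section degreehelpers
variable [Fintype V] [DecidableEq V] [DecidableRel G.Adj]

lemma twoNbrs_of_two {x y z : V} (hdeg : G.degree y = 2) (h1 : G.Adj y x) (h2 : G.Adj y z)
    (hxz : x ≠ z) : TwoNbrs G x y z := by
  refine ⟨h1, h2, hxz, ?_⟩
  intro m hm
  have hsub : ({x, z} : Finset V) ⊆ G.neighborFinset y := by
    intro t ht
    rcases Finset.mem_insert.mp ht with h | h
    · subst h; rwa [SimpleGraph.mem_neighborFinset]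
    · rw [Finset.mem_singleton] at h; subst h; rwa [SimpleGraph.mem_neighborFinset]
  have hcard2 : ({x, z} : Finset V).card = 2 := by
    rw [Finset.card_insert_of_notMem (by simpa using hxz), Finset.card_singleton]
  have hdegc : (G.neighborFinset y).card = 2 := hdeg
  have heq : ({x, z} : Finset V) = G.neighborFinset y :=
    Finset.eq_of_subset_of_card_le hsub (by omega)
  have hmem : m ∈ G.neighborFinset y := by rwa [SimpleGraph.mem_neighborFinset]
  rw [← heq] at hmem
  rcases Finset.mem_insert.mp hmem with h | h
  · exact Or.inl h
  · exact Or.inr (Finset.mem_singleton.mp h)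

lemma exists_twoNbrs {x y : V} (hdeg : G.degree x = 2) (h1 : G.Adj x y) :
    ∃ w, TwoNbrs G y x w := by
  have hdegc : (G.neighborFinset x).card = 2 := hdeg
  obtain ⟨u', v', huv, hset⟩ := Finset.card_eq_two.mp hdegc
  have hy : y ∈ G.neighborFinset x := by rwa [SimpleGraph.mem_neighborFinset]
  have hu' : G.Adj x u' := by
    rw [← SimpleGraph.mem_neighborFinset, hset]; exact Finset.mem_insert_self _ _
  have hv' : G.Adj x v' := by
    rw [← SimpleGraph.mem_neighborFinset, hset]
    exact Finset.mem_insert_of_mem (Finset.mem_singleton_self _)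
  rw [hset] at hy
  rcases Finset.mem_insert.mp hy with h | h
  · subst h; exact ⟨v', twoNbrs_of_two hdeg h1 hv' huv⟩
  · rw [Finset.mem_singleton] at h; subst h
    exact ⟨u', twoNbrs_of_two hdeg h1 hu' (Ne.symm huv)⟩

end degreehelpers

open Classical in
noncomputable def otherNbr (G : SimpleGraph V) (a b : V) : V :=
  if h : ∃ z, G.Adj b z ∧ z ≠ a then h.choose else a

lemma twoNbrs_otherNbr [Fintype V] [DecidableEq V] [DecidableRel G.Adj] {a b : V}
    (hdeg : G.degree b = 2) (hadj : G.Adj b a) : TwoNbrs G a b (otherNbr G a b) := by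
  obtain ⟨z, hz⟩ := exists_twoNbrs hdeg hadj
  have hex : ∃ m, G.Adj b m ∧ m ≠ a := ⟨z, hz.2.1, (hz.2.2.1).symm⟩
  classical
  rw [otherNbr]
  rw [dif_pos hex]
  obtain ⟨hadj', hne'⟩ := hex.choose_spec
  rcases hz.2.2.2 _ hadj' with h | h
  · exact absurd h hne'
  · rw [h]; exact hz

lemma keyBound [Fintype V] [DecidableEq V] [DecidableRel G.Adj] {r : ℕ}
    {col : Sym2 V → Fin r} (hcol : RainbowTwoConnectedColouring G col)
    (D : Finset ((_ : V) × V))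
    (hD : ∀ e ∈ D, G.Adj e.1 e.2 ∧ G.degree e.1 = 2 ∧ G.degree e.2 = 2) :
    D.card ≤ 2 * (r * r - r) := by
  classical
  set ψ : (_ : V) × V → Fin r × Fin r :=
    fun e => (col s(e.1, e.2), col s(e.2, otherNbr G e.1 e.2)) with hψ
  have hmaps : ∀ e ∈ D, ψ e ∈ (Finset.univ : Finset (Fin r)).offDiag := by
    intro e he
    obtain ⟨hadj, hd1, hd2⟩ := hD e he
    have hy : TwoNbrs G e.1 e.2 (otherNbr G e.1 e.2) := twoNbrs_otherNbr hd2 hadj.symm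
    obtain ⟨w, hx⟩ := exists_twoNbrs hd1 hadj
    have hne := colA hcol hx hy
    rw [Finset.mem_offDiag]
    exact ⟨Finset.mem_univ _, Finset.mem_univ _, hne⟩
  have himg : D.image ψ ⊆ (Finset.univ : Finset (Fin r)).offDiag :=
    Finset.image_subset_iff.mpr hmaps
  have hcard_img : (D.image ψ).card ≤ r * r - r := by
    have hh := Finset.card_le_card himg
    rwa [Finset.offDiag_card, Finset.card_univ, Fintype.card_fin] at hh
  have hkey : ∀ e ∈ D, ∀ e' ∈ D, ψ e = ψ e' → e = e' ∨ (e.1 = e'.2 ∧ e.2 = e'.1) := by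
    intro e he e' he' hpsi
    obtain ⟨hadj, hd1, hd2⟩ := hD e he
    obtain ⟨hadj', hd1', hd2'⟩ := hD e' he'
    obtain ⟨a, b⟩ := e
    obtain ⟨a', b'⟩ := e'
    simp only [hψ, Prod.mk.injEq] at hpsi
    obtain ⟨hcc, hσ⟩ := hpsi
    dsimp only at hadj hd1 hd2 hadj' hd1' hd2' hcc hσ ⊢
    by_cases heq : a = a' ∧ b = b'
    · left; rw [heq.1, heq.2]
    · by_cases hswap : a = b' ∧ b = a'
      · exact Or.inr hswap
      · exfalso
        by_cases haa : a = a'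
        · have hbb : b ≠ b' := fun h => heq ⟨haa, h⟩
          subst haa
          have hy2 : TwoNbrs G b a b' := twoNbrs_of_two hd1 hadj hadj' hbb
          obtain ⟨w, hx2⟩ := exists_twoNbrs hd2 hadj.symm
          apply colA hcol hx2 hy2
          calc col s(b, a) = col s(a, b) := by rw [Sym2.eq_swap]
            _ = col s(a, b') := hcc
        · by_cases hbb : b = b'
          · subst hbb
            have hy2 : TwoNbrs G a b a' := twoNbrs_of_two hd2 hadj.symm hadj'.symm haa
            obtain ⟨w, hx2⟩ := exists_twoNbrs hd1 hadj
            apply colA hcol hx2 hy2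
            calc col s(a, b) = col s(a', b) := hcc
              _ = col s(b, a') := by rw [Sym2.eq_swap]
          · by_cases hab : a = b'
            · have hba : b ≠ a' := fun h => hswap ⟨hab, h⟩
              subst hab
              have hy2 : TwoNbrs G b a a' := twoNbrs_of_two hd1 hadj hadj'.symm hba
              obtain ⟨w, hx2⟩ := exists_twoNbrs hd2 hadj.symm
              apply colA hcol hx2 hy2
              calc col s(b, a) = col s(a, b) := by rw [Sym2.eq_swap]
                _ = col s(a', a) := hcc
                _ = col s(a, a') := by rw [Sym2.eq_swap]
            · by_cases hba : b = a'
              · subst hba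
                have hy2 : TwoNbrs G a b b' := twoNbrs_of_two hd2 hadj.symm hadj' hab
                obtain ⟨w, hx2⟩ := exists_twoNbrs hd1 hadj
                exact colA hcol hx2 hy2 hcc
              · have hy2 : TwoNbrs G a b (otherNbr G a b) := twoNbrs_otherNbr hd2 hadj.symm
                have hy2' : TwoNbrs G a' b' (otherNbr G a' b') :=
                  twoNbrs_otherNbr hd2' hadj'.symm
                obtain ⟨w, hx2⟩ := exists_twoNbrs hd1 hadj
                obtain ⟨w', hx2'⟩ := exists_twoNbrs hd1' hadj'
                exact colBB hcol hx2 hy2 hx2' hy2' haa hab hba hbb hcc hσ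
  have hfib : ∀ p ∈ D.image ψ, (D.filter fun e => ψ e = p).card ≤ 2 := by
    intro p hp
    obtain ⟨e₀, he₀D, he₀p⟩ := Finset.mem_image.mp hp
    have hsub : D.filter (fun e => ψ e = p) ⊆ {e₀, ⟨e₀.2, e₀.1⟩} := by
      intro e he
      rw [Finset.mem_filter] at he
      rcases hkey e he.1 e₀ he₀D (by rw [he.2, he₀p]) with h | h
      · simp [h]
      · have heq2 : e = (⟨e₀.2, e₀.1⟩ : (_ : V) × V) := by
          obtain ⟨x1, x2⟩ := e
          obtain ⟨y1, y2⟩ := e₀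
          dsimp only at h
          rw [h.1, h.2]
        simp [heq2]
    calc (D.filter fun e => ψ e = p).card
        ≤ ({e₀, ⟨e₀.2, e₀.1⟩} : Finset ((_ : V) × V)).card := Finset.card_le_card hsub
      _ ≤ 2 := (Finset.card_insert_le _ _).trans (by simp)
  calc D.card ≤ 2 * (D.image ψ).card := Finset.card_le_mul_card_image D 2 hfib
    _ ≤ 2 * (r * r - r) := by omega

lemma edge_bound [Fintype V] [DecidableEq V] [DecidableRel G.Adj] {r : ℕ}
    (hG : TwoConnected G) {col : Sym2 V → Fin r}
    (hcol : RainbowTwoConnectedColouring G col) :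
    6 * Fintype.card V ≤ 5 * G.edgeFinset.card + r * (r - 1) := by
  classical
  set A : Finset V := Finset.univ.filter (fun v => G.degree v = 2) with hA
  set B : Finset V := Finset.univ.filter (fun v => ¬ G.degree v = 2) with hB
  have hmin : ∀ v, 2 ≤ G.degree v := hG.two_le_degree
  have hn : A.card + B.card = Fintype.card V := by
    rw [hA, hB, Finset.card_filter_add_card_filter_not]
    exact Finset.card_univ
  have hhs : ∑ v, G.degree v = 2 * G.edgeFinset.card := G.sum_degrees_eq_twice_card_edges
  have hsplit : ∑ v ∈ A, G.degree v + ∑ v ∈ B, G.degree v = ∑ v, G.degree v := by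
    rw [hA, hB]
    exact Finset.sum_filter_add_sum_filter_not _ _ _
  have hsumA : ∑ v ∈ A, G.degree v = 2 * A.card := by
    rw [Finset.sum_congr rfl (fun v hv => (Finset.mem_filter.mp hv).2)]
    rw [Finset.sum_const, smul_eq_mul, mul_comm]
  have hsumB : 3 * B.card ≤ ∑ v ∈ B, G.degree v := by
    rw [mul_comm]
    rw [← smul_eq_mul]
    apply Finset.card_nsmul_le_sum
    intro x hx
    have h1 := hmin x
    have h2 : ¬ G.degree x = 2 := (Finset.mem_filter.mp hx).2
    omega
  -- fibers
  set t : V → Finset V := fun a => (G.neighborFinset a).filter (fun b => G.degree b = 2) with ht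
  set tB : V → Finset V :=
    fun a => (G.neighborFinset a).filter (fun b => ¬ G.degree b = 2) with htB
  set D : Finset ((_ : V) × V) := A.sigma t with hD
  have hDcard : D.card = ∑ a ∈ A, (t a).card := Finset.card_sigma _ _
  have hDprop : ∀ e ∈ D, G.Adj e.1 e.2 ∧ G.degree e.1 = 2 ∧ G.degree e.2 = 2 := by
    intro e he
    rw [hD, Finset.mem_sigma] at he
    obtain ⟨h1, h2⟩ := he
    have h1' := (Finset.mem_filter.mp h1).2
    rw [ht] at h2
    have h2' := Finset.mem_filter.mp h2
    exact ⟨(SimpleGraph.mem_neighborFinset _ _ _).mp h2'.1, h1', h2'.2⟩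
  have hkb : D.card ≤ 2 * (r * r - r) := keyBound hcol D hDprop
  have hfsum : ∀ a ∈ A, (t a).card + (tB a).card = 2 := by
    intro a ha
    rw [ht, htB]
    rw [Finset.card_filter_add_card_filter_not]
    exact (Finset.mem_filter.mp ha).2
  have hEABD : ∑ a ∈ A, (t a).card + ∑ a ∈ A, (tB a).card = 2 * A.card := by
    rw [← Finset.sum_add_distrib]
    rw [Finset.sum_congr rfl hfsum, Finset.sum_const, smul_eq_mul, mul_comm]
  have hEAB_le : ∑ a ∈ A, (tB a).card ≤ ∑ v ∈ B, G.degree v := by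
    have hstep1 : ∀ a, tB a = B.filter (fun b => G.Adj a b) := by
      intro a
      rw [htB, hB]
      ext b
      simp only [Finset.mem_filter, SimpleGraph.mem_neighborFinset, Finset.mem_univ, true_and]
      tauto
    calc ∑ a ∈ A, (tB a).card = ∑ a ∈ A, ∑ b ∈ B, (if G.Adj a b then 1 else 0) := by
          refine Finset.sum_congr rfl (fun a _ => ?_)
          rw [hstep1 a, Finset.card_filter]
      _ = ∑ b ∈ B, ∑ a ∈ A, (if G.Adj a b then 1 else 0) := Finset.sum_comm
      _ ≤ ∑ v ∈ B, G.degree v := by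
          refine Finset.sum_le_sum (fun b _ => ?_)
          rw [← Finset.card_filter]
          have hsub : A.filter (fun a => G.Adj a b) ⊆ G.neighborFinset b := by
            intro a ha
            rw [SimpleGraph.mem_neighborFinset]
            exact ((Finset.mem_filter.mp ha).2).symm
          exact Finset.card_le_card hsub
  have hk : r * (r - 1) + r = r * r := by
    cases r with
    | zero => rfl
    | succ s => rw [Nat.succ_sub_one]; ring
  omega

theorem TwoConnected.exists_colouring [Fintype V] [DecidableEq V] (hG : TwoConnected G) :
    ∃ N, ∃ col : Sym2 V → Fin N, RainbowTwoConnectedColouring G col := by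
  classical
  refine ⟨Fintype.card (Sym2 V), fun e => Fintype.equivFin (Sym2 V) e, ?_⟩
  intro u v huv
  obtain ⟨p, q, hp, hq, hne, hdisj⟩ := hG.two_paths u v huv
  have hrb : ∀ w : G.Walk u v, w.IsPath →
      IsRainbowWalk (fun e => Fintype.equivFin (Sym2 V) e) w := by
    intro w hw
    exact List.Nodup.map (Fintype.equivFin (Sym2 V)).injective
      (Walk.edges_nodup_of_support_nodup ((Walk.isPath_def _).mp hw))
  exact ⟨p, q, hp, hq, hne, hrb p hp, hrb q hq, hdisj⟩

lemma exists_col_of_rc2_le [Fintype V] [DecidableEq V] {r : ℕ}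
    (hG : TwoConnected G) (hrc : rc2 G ≤ r) :
    ∃ col : Sym2 V → Fin r, RainbowTwoConnectedColouring G col := by
  obtain ⟨N, col₀, hcol₀⟩ := hG.exists_colouring
  have hne : {k : ℕ | ∃ col : Sym2 V → Fin k, RainbowTwoConnectedColouring G col}.Nonempty :=
    ⟨N, col₀, hcol₀⟩
  obtain ⟨col₁, hcol₁⟩ := Nat.sInf_mem hne
  have hle : sInf {k : ℕ | ∃ col : Sym2 V → Fin k, RainbowTwoConnectedColouring G col} ≤ r := hrc
  refine ⟨fun e => Fin.castLE hle (col₁ e), ?_⟩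
  intro u v huv
  obtain ⟨p, q, hp, hq, hne2, hr1, hr2, hdisj⟩ := hcol₁ u v huv
  have htrans : ∀ w : G.Walk u v, IsRainbowWalk col₁ w →
      IsRainbowWalk (fun e => Fin.castLE hle (col₁ e)) w := by
    intro w hw
    unfold IsRainbowWalk at hw ⊢
    have : (w.edges.map fun e => Fin.castLE hle (col₁ e))
        = (w.edges.map col₁).map (Fin.castLE hle) := by
      rw [List.map_map]; rfl
    rw [this]
    exact List.Nodup.map (Fin.castLE_injective hle) hw
  exact ⟨p, q, hp, hq, hne2, htrans p hr1, htrans q hr2, hdisj⟩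

section kn

lemma top_twoConnected {n : ℕ} (hn : 3 ≤ n) : TwoConnected (⊤ : SimpleGraph (Fin n)) := by
  have hcard : Fintype.card (Fin n) = n := Fintype.card_fin n
  refine ⟨by rw [hcard]; exact hn, ?_⟩
  intro v
  obtain ⟨x, y, hxy, hxv, hyv⟩ := exists_two_other (by rw [hcard]; exact hn) v
  haveI : Nonempty ({v}ᶜ : Set (Fin n)) := ⟨⟨x, by simpa using hxv⟩⟩
  refine ⟨fun a b => ?_⟩
  by_cases hab : a = b
  · rw [hab]
  · have hadj : ((⊤ : SimpleGraph (Fin n)).induce ({v}ᶜ : Set (Fin n))).Adj a b := by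
      have hval : (a : Fin n) ≠ (b : Fin n) := fun h => hab (Subtype.ext h)
      exact hval
    exact hadj.reachable

lemma exists_w_aux {n : ℕ} (a b : ℕ) (hab : a < b) (hb : b < n) (hn : 6 ≤ n) :
    ∃ c, c < n ∧ c ≠ a ∧ c ≠ b ∧
      2 * (min a c % 2) + max a c % 2 ≠ 2 * (min c b % 2) + max c b % 2 := by
  by_cases hpar : a % 2 = b % 2
  · exact ⟨a + 1, by omega, by omega, by omega, by omega⟩
  · by_cases ha2 : 2 ≤ a
    · exact ⟨a - 2, by omega, by omega, by omega, by omega⟩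
    · exact ⟨a + 2, by omega, by omega, by omega, by omega⟩

lemma exists_w {n : ℕ} (hn : 6 ≤ n) (a b : ℕ) (ha : a < n) (hb : b < n) (hab : a ≠ b) :
    ∃ c, c < n ∧ c ≠ a ∧ c ≠ b ∧
      2 * (min a c % 2) + max a c % 2 ≠ 2 * (min c b % 2) + max c b % 2 := by
  rcases Nat.lt_or_ge a b with h | h
  · exact exists_w_aux a b h hb hn
  · have h' : b < a := by omega
    obtain ⟨c, h1, h2, h3, h4⟩ := exists_w_aux b a h' ha hn
    exact ⟨c, h1, h3, h2, fun hEq => h4 (by omega)⟩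

def colK (n r : ℕ) (hr : 5 ≤ r) : Sym2 (Fin n) → Fin r :=
  Sym2.lift ⟨fun a b => ⟨2 * (min a.val b.val % 2) + max a.val b.val % 2, by omega⟩,
    fun a b => by apply Fin.ext; simp only []; omega⟩

lemma rc2_top_le {n r : ℕ} (hn : 6 ≤ n) (hr : 5 ≤ r) :
    rc2 (⊤ : SimpleGraph (Fin n)) ≤ r := by
  apply Nat.sInf_le
  refine ⟨colK n r hr, ?_⟩
  intro u v huv
  have hadj_uv : (⊤ : SimpleGraph (Fin n)).Adj u v := huv
  obtain ⟨c, hc1, hc2, hc3, hc4⟩ :=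
    exists_w hn u.val v.val u.isLt v.isLt (fun h => huv (Fin.ext h))
  set w : Fin n := ⟨c, hc1⟩ with hwdef
  have hwu : w ≠ u := fun h => hc2 (congrArg Fin.val h)
  have hwv : w ≠ v := fun h => hc3 (congrArg Fin.val h)
  have hadj_uw : (⊤ : SimpleGraph (Fin n)).Adj u w := Ne.symm hwu
  have hadj_wv : (⊤ : SimpleGraph (Fin n)).Adj w v := hwv
  refine ⟨Walk.cons hadj_uv Walk.nil, Walk.cons hadj_uw (Walk.cons hadj_wv Walk.nil),
    ?_, ?_, ?_, ?_, ?_, ?_⟩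
  · rw [Walk.cons_isPath_iff]
    refine ⟨Walk.IsPath.nil, ?_⟩
    simp only [Walk.support_nil, List.mem_singleton]
    exact huv
  · rw [Walk.cons_isPath_iff, Walk.cons_isPath_iff]
    refine ⟨⟨Walk.IsPath.nil, ?_⟩, ?_⟩
    · simp only [Walk.support_nil, List.mem_singleton]
      exact hwv
    · simp only [Walk.support_cons, Walk.support_nil, List.mem_cons, List.mem_singleton]
      push_neg
      exact ⟨Ne.symm hwu, huv, by simp⟩
  · intro hEq
    have hlen := congrArg Walk.length hEq
    simp [Walk.length_cons] at hlen
  · unfold IsRainbowWalk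
    simp
  · unfold IsRainbowWalk
    simp only [Walk.edges_cons, Walk.edges_nil, List.map_cons, List.map_nil, List.nodup_cons,
      List.mem_cons, List.mem_singleton, List.not_mem_nil, not_false_iff, List.nodup_nil,
      and_true]
    intro hcontra
    rcases hcontra with hcontra | hcontra
    · apply hc4
      have := congrArg Fin.val hcontra
      simpa [colK] using this
    · exact hcontra
  · intro m hm _
    simp only [Walk.support_cons, Walk.support_nil, List.mem_cons, List.mem_singleton] at hm
    rcases hm with h | h
    · exact Or.inl h
    · rcases h with h | h
      · exact Or.inr h
      · exact absurd h List.not_mem_nil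

end kn


/-- For 5 ≤ r ≤ n−1 and n > r(r−1)/6, every 2-connected graph on n
vertices with rc₂(G) ≤ r has at least (6/5)n − r(r−1)/5 edges; consequently
t₂(n,r) ≥ (6/5)n − r(r−1)/5. -/
theorem stmt4 (r n : ℕ) (hr : 5 ≤ r) (hrn : r ≤ n - 1)
    (hn : ((r : ℝ) * (r - 1)) / 6 < (n : ℝ)) :
    (∀ G : SimpleGraph (Fin n), TwoConnected G → rc2 G ≤ r →
      (6 / 5 : ℝ) * n - ((r : ℝ) * (r - 1)) / 5 ≤ (G.edgeSet.ncard : ℝ)) ∧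
    (6 / 5 : ℝ) * n - ((r : ℝ) * (r - 1)) / 5 ≤ (t2 n r : ℝ) := by
  have hn6 : 6 ≤ n := by omega
  have hclause : ∀ G : SimpleGraph (Fin n), TwoConnected G → rc2 G ≤ r →
      (6 / 5 : ℝ) * n - ((r : ℝ) * (r - 1)) / 5 ≤ (G.edgeSet.ncard : ℝ) := by
    intro G hG hrc
    classical
    letI : DecidableRel G.Adj := Classical.decRel _
    obtain ⟨col, hcol⟩ := exists_col_of_rc2_le hG hrc
    have hb := edge_bound hG hcol
    have hcard : G.edgeSet.ncard = G.edgeFinset.card := by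
      rw [← SimpleGraph.coe_edgeFinset, Set.ncard_coe_finset]
    rw [Fintype.card_fin] at hb
    rw [hcard]
    have h1 : ((6 * n : ℕ) : ℝ) ≤ ((5 * G.edgeFinset.card + r * (r - 1) : ℕ) : ℝ) :=
      Nat.cast_le.mpr hb
    push_cast [Nat.cast_sub (show 1 ≤ r by omega)] at h1
    linarith
  refine ⟨hclause, ?_⟩
  have hset : {m : ℕ | ∃ G : SimpleGraph (Fin n), TwoConnected G ∧ rc2 G ≤ r ∧
      G.edgeSet.ncard = m}.Nonempty :=
    ⟨(⊤ : SimpleGraph (Fin n)).edgeSet.ncard, ⊤, top_twoConnected (by omega),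
      rc2_top_le hn6 hr, rfl⟩
  obtain ⟨G₀, hG₀, hrc₀, hm₀⟩ := Nat.sInf_mem hset
  have hfin := hclause G₀ hG₀ hrc₀
  rw [hm₀] at hfin
  exact hfin
end

section
/- Let r ≥ 2, let G be a 2-connected graph that is not a cycle, and suppose G admits a rainbow 2-connected edge-colouring using at most r colours. Let V₂ denote the set of vertices of G of degree exactly two. Then the number of vertices of V₂ that lie in a connected component of the induced subgraph G[V₂] having at least two vertices is at most r(r−1)/2. -/
open SimpleGraph

set_option linter.unusedSectionVars false

namespace Stmt5Aux

variable {V : Type*} [Fintype V] [DecidableEq V] {G : SimpleGraph V} [DecidableRel G.Adj] {r : ℕ}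

lemma exists_adj_of_reachable {X : Type*} {H : SimpleGraph X} {x y : X} (hxy : x ≠ y)
    (h : H.Reachable x y) : ∃ b, H.Adj x b := by
  obtain ⟨w⟩ := h
  cases w with
  | nil => exact absurd rfl hxy
  | cons h _ => exact ⟨_, h⟩

lemma exists_last_edge {y t : V} (p : G.Walk y t) :
    y ≠ t → ∃ z : V, G.Adj t z ∧ s(t, z) ∈ p.edges := by
  induction p with
  | nil => exact fun h => absurd rfl h
  | @cons a c d h1 q ih =>
    intro _
    by_cases hct : c = d
    · subst hct
      exact ⟨a, h1.symm, by rw [Walk.edges_cons]; exact List.mem_cons.2 (Or.inl Sym2.eq_swap)⟩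
    · obtain ⟨z, hz, hm⟩ := ih hct
      exact ⟨z, hz, by rw [Walk.edges_cons]; exact List.mem_cons_of_mem _ hm⟩

lemma nbr_eq {v a b c : V} (hv : G.degree v = 2) (ha : G.Adj v a) (hb : G.Adj v b)
    (hc : G.Adj v c) (hac : a ≠ c) (hbc : b ≠ c) : a = b := by
  have hcard : (G.neighborFinset v).card = 2 := by
    rw [G.card_neighborFinset_eq_degree]; exact hv
  have hsub : ({c, a} : Finset V) ⊆ G.neighborFinset v := by
    intro x hx
    rcases Finset.mem_insert.mp hx with h | h
    · subst h; exact (G.mem_neighborFinset v x).2 hc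
    · rw [Finset.mem_singleton] at h; subst h; exact (G.mem_neighborFinset v x).2 ha
  have heq : ({c, a} : Finset V) = G.neighborFinset v :=
    Finset.eq_of_subset_of_card_le hsub
      (by rw [hcard, Finset.card_pair (Ne.symm hac)])
  have hbmem : b ∈ ({c, a} : Finset V) := by
    rw [heq]; exact (G.mem_neighborFinset v b).2 hb
  rcases Finset.mem_insert.mp hbmem with h | h
  · exact absurd h hbc
  · rw [Finset.mem_singleton] at h; exact h.symm

lemma other_nbr {v w : V} (hv : G.degree v = 2) (hw : G.Adj v w) :
    ∃ y, G.Adj v y ∧ y ≠ w := by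
  have hcard : (G.neighborFinset v).card = 2 := by
    rw [G.card_neighborFinset_eq_degree]; exact hv
  have hne : ((G.neighborFinset v).erase w).Nonempty := by
    rw [← Finset.card_pos, Finset.card_erase_of_mem ((G.mem_neighborFinset v w).2 hw), hcard]
    norm_num
  obtain ⟨y, hy⟩ := hne
  rw [Finset.mem_erase] at hy
  exact ⟨y, (G.mem_neighborFinset v y).1 hy.2, hy.1⟩

lemma exists_path_from_nbr (col : Sym2 V → Fin r)
    (hcol : RainbowTwoConnectedColouring G col)
    {s t w : V} (hst : s ≠ t) (hdeg : G.degree s = 2) (hw : G.Adj s w) :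
    ∃ p1 : G.Walk w t, p1.IsPath ∧ s ∉ p1.support ∧
      (List.map col (s(s, w) :: p1.edges)).Nodup := by
  obtain ⟨p, q, hp, hq, hpq, hrp, hrq, hdisj⟩ := hcol s t hst
  cases p with
  | nil => exact absurd rfl hst
  | @cons _ a _ h1 p1 =>
    cases q with
    | nil => exact absurd rfl hst
    | @cons _ b _ h2 q1 =>
      have hab : a ≠ b := by
        intro hE
        subst hE
        by_cases hat : a = t
        · subst hat
          have hp1 : p1 = Walk.nil := by
            cases p1 with
            | nil => rfl
            | cons h q =>
              exfalso
              have hn := ((Walk.cons_isPath_iff h1 _).mp hp).1.support_nodup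
              rw [Walk.support_cons] at hn
              exact (List.nodup_cons.mp hn).1 (Walk.end_mem_support _)
          have hq1 : q1 = Walk.nil := by
            cases q1 with
            | nil => rfl
            | cons h q =>
              exfalso
              have hn := ((Walk.cons_isPath_iff h2 _).mp hq).1.support_nodup
              rw [Walk.support_cons] at hn
              exact (List.nodup_cons.mp hn).1 (Walk.end_mem_support _)
          subst hp1; subst hq1
          exact hpq rfl
        · have hm1 : a ∈ (Walk.cons h1 p1).support := by
            rw [Walk.support_cons]; exact List.mem_cons_of_mem _ p1.start_mem_support
          have hm2 : a ∈ (Walk.cons h2 q1).support := by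
            rw [Walk.support_cons]; exact List.mem_cons_of_mem _ q1.start_mem_support
          rcases hdisj a hm1 hm2 with h | h
          · exact G.irrefl (h ▸ h1)
          · exact hat h
      have hwa : w = a ∨ w = b := by
        by_cases hwa : w = a
        · exact Or.inl hwa
        · exact Or.inr (nbr_eq hdeg hw h2 h1 hwa hab.symm)
      rcases hwa with h | h
      · subst h
        obtain ⟨hp1, hsp⟩ := (Walk.cons_isPath_iff h1 p1).mp hp
        refine ⟨p1, hp1, hsp, ?_⟩
        have hr := hrp
        unfold IsRainbowWalk at hr
        rwa [Walk.edges_cons] at hr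
      · subst h
        obtain ⟨hq1, hsq⟩ := (Walk.cons_isPath_iff h2 q1).mp hq
        refine ⟨q1, hq1, hsq, ?_⟩
        have hr := hrq
        unfold IsRainbowWalk at hr
        rwa [Walk.edges_cons] at hr

lemma exists_forced_cons (col : Sym2 V → Fin r)
    (hcol : RainbowTwoConnectedColouring G col)
    {u' u t : V} (hadj : G.Adj u' u) (hu' : G.degree u' = 2)
    (ht1 : t ≠ u') (ht2 : t ≠ u) :
    ∃ y : V, G.Adj u y ∧ y ≠ u' ∧
      ∃ P2 : G.Walk y t, P2.IsPath ∧ u ∉ P2.support ∧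
        (List.map col (s(u', u) :: s(u, y) :: P2.edges)).Nodup := by
  obtain ⟨p1, hp1, hsp, hnd⟩ := exists_path_from_nbr col hcol (Ne.symm ht1) hu' hadj
  cases p1 with
  | nil => exact absurd rfl (Ne.symm ht2)
  | @cons _ y _ h3 P2 =>
    obtain ⟨hP2, husup⟩ := (Walk.cons_isPath_iff h3 P2).mp hp1
    have hyu' : y ≠ u' := by
      intro hE
      subst hE
      apply hsp
      rw [Walk.support_cons]
      exact List.mem_cons_of_mem _ P2.start_mem_support
    refine ⟨y, h3, hyu', P2, hP2, husup, ?_⟩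
    rwa [Walk.edges_cons] at hnd

lemma colour_ne (col : Sym2 V → Fin r)
    (hcol : RainbowTwoConnectedColouring G col) (hcard : 3 ≤ Fintype.card V)
    {v v' x : V} (hvv' : G.Adj v v') (hv : G.degree v = 2) (hv' : G.degree v' = 2)
    (hx : G.Adj v x) (hxv' : x ≠ v') :
    col s(v, v') ≠ col s(v, x) := by
  obtain ⟨z, hz⟩ : ∃ z, z ∉ ({v, v'} : Finset V) := by
    by_contra hc
    push_neg at hc
    have hsub : (Finset.univ : Finset V) ⊆ {v, v'} := fun z _ => hc z
    have hle := Finset.card_le_card hsub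
    rw [Finset.card_univ] at hle
    have h2 : ({v, v'} : Finset V).card ≤ 2 := Finset.card_insert_le _ _ |>.trans (by simp)
    omega
  rw [Finset.mem_insert, Finset.mem_singleton] at hz
  push_neg at hz
  obtain ⟨y, hvy, hyv', P2, _, _, hnd⟩ :=
    exists_forced_cons col hcol hvv'.symm hv' hz.2 hz.1
  have hxy : x = y := nbr_eq hv hx hvy hvv' hxv' hyv'
  subst hxy
  have hswap : s(v, v') = s(v', v) := Sym2.eq_swap
  rw [hswap]
  simp only [List.map_cons, List.nodup_cons, List.mem_cons] at hnd
  exact fun hE => hnd.1 (Or.inl hE)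

end Stmt5Aux

/-- If a 2-connected graph G that is not a cycle has a rainbow
2-connected colouring with at most r colours (r ≥ 2), then the number of
degree-2 vertices lying in a component of G[V₂] with at least two vertices is
at most r(r−1)/2. -/
theorem stmt5 {V : Type*} [Fintype V] [DecidableEq V] (G : SimpleGraph V) [DecidableRel G.Adj]
    (r : ℕ) (hr : 2 ≤ r) (hG : TwoConnected G)
    (hnotcycle : ¬ (G.Connected ∧ ∀ v : V, G.degree v = 2))
    (col : Sym2 V → Fin r) (hcol : RainbowTwoConnectedColouring G col) :
    {v : V | ∃ hv : v ∈ {w : V | G.degree w = 2}, ∃ u : V,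
        ∃ hu : u ∈ {w : V | G.degree w = 2}, u ≠ v ∧
        (G.induce {w : V | G.degree w = 2}).Reachable ⟨v, hv⟩ ⟨u, hu⟩}.ncard
      ≤ r * (r - 1) / 2 := by
  classical
  have hcard3 : 3 ≤ Fintype.card V := hG.1
  set S : Set V := {v : V | ∃ hv : v ∈ {w : V | G.degree w = 2}, ∃ u : V,
        ∃ hu : u ∈ {w : V | G.degree w = 2}, u ≠ v ∧
        (G.induce {w : V | G.degree w = 2}).Reachable ⟨v, hv⟩ ⟨u, hu⟩} with hSdef
  -- extraction: every member of S has degree 2 and a degree-2 neighbour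
  have hS : ∀ v ∈ S, G.degree v = 2 ∧ ∃ v', G.Adj v v' ∧ G.degree v' = 2 := by
    rintro v ⟨hv, u, hu, hne, hreach⟩
    refine ⟨hv, ?_⟩
    have hxy : (⟨v, hv⟩ : {w : V | G.degree w = 2}) ≠ ⟨u, hu⟩ := by
      intro h
      exact hne (congrArg Subtype.val h).symm
    obtain ⟨b, hb⟩ := Stmt5Aux.exists_adj_of_reachable hxy hreach
    exact ⟨b.1, hb, b.2⟩
  -- the colour-pair map
  set F : V → Finset (Fin r) :=
    fun v => (G.neighborFinset v).image (fun w => col s(v, w)) with hFdef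
  -- each F v for v ∈ S has exactly two elements
  have hmemT : ∀ v ∈ S, (F v).card = 2 := by
    intro v hvS
    obtain ⟨hdv, v', hvv', hdv'⟩ := hS v hvS
    obtain ⟨y, hvy, hyv'⟩ := Stmt5Aux.other_nbr hdv hvv'
    have hcne : col s(v, v') ≠ col s(v, y) :=
      Stmt5Aux.colour_ne col hcol hcard3 hvv' hdv hdv' hvy hyv'
    have hnbrs : G.neighborFinset v = {v', y} := by
      have hcard : (G.neighborFinset v).card = 2 := by
        rw [G.card_neighborFinset_eq_degree]; exact hdv
      have hsub : ({v', y} : Finset V) ⊆ G.neighborFinset v := by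
        intro x hx
        rcases Finset.mem_insert.mp hx with h | h
        · subst h; exact (G.mem_neighborFinset v x).2 hvv'
        · rw [Finset.mem_singleton] at h; subst h; exact (G.mem_neighborFinset v x).2 hvy
      exact (Finset.eq_of_subset_of_card_le hsub
        (by rw [hcard, Finset.card_pair (Ne.symm hyv')])).symm
    rw [hFdef]
    simp only []
    rw [hnbrs, Finset.image_insert, Finset.image_singleton]
    rw [Finset.card_insert_of_notMem (by rw [Finset.mem_singleton]; exact hcne),
      Finset.card_singleton]
  -- injectivity of F on S
  have hinj : Set.InjOn F S := by
    intro a ha b hb hFab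
    by_contra hne
    obtain ⟨hda, a', haa', hda'⟩ := hS a ha
    obtain ⟨hdb, b', hbb', hdb'⟩ := hS b hb
    by_cases hadj : G.Adj a b
    · -- adjacent case
      obtain ⟨y, hay, hyb⟩ := Stmt5Aux.other_nbr hda hadj
      obtain ⟨p1, hp1, hsup, hnd⟩ := Stmt5Aux.exists_path_from_nbr col hcol hne hda hay
      obtain ⟨z, hbz, hzmem⟩ := Stmt5Aux.exists_last_edge p1 hyb
      have hza : z ≠ a := by
        intro hE
        subst hE
        exact hsup (Walk.snd_mem_support_of_mem_edges p1 hzmem)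
      have h1 : col s(b, z) ∈ F a := by
        rw [hFab, hFdef]
        exact Finset.mem_image.2 ⟨z, (G.mem_neighborFinset b z).2 hbz, rfl⟩
      rw [hFdef] at h1
      obtain ⟨w, hwmem, hwcol⟩ := Finset.mem_image.mp h1
      have hwadj : G.Adj a w := (G.mem_neighborFinset a w).1 hwmem
      by_cases hwy : w = y
      · subst hwy
        have hmem2 : col s(b, z) ∈ List.map col p1.edges :=
          List.mem_map.2 ⟨s(b, z), hzmem, rfl⟩
        rw [← hwcol] at hmem2
        simp only [List.map_cons, List.nodup_cons] at hnd
        exact hnd.1 hmem2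
      · have hwb : w = b := Stmt5Aux.nbr_eq hda hwadj hadj hay hwy (Ne.symm hyb)
        rw [hwb] at hwcol
        -- col s(a,w=b) = col s(b,z); but colour_ne at b gives contradiction
        have hb'mem : b' = a ∨ b' = z := by
          by_cases h : b' = a
          · exact Or.inl h
          · exact Or.inr (Stmt5Aux.nbr_eq hdb hbb' hbz hadj.symm h hza)
        have hne2 : col s(b, a) ≠ col s(b, z) := by
          rcases hb'mem with h | h
          · subst h
            exact Stmt5Aux.colour_ne col hcol hcard3 hbb' hdb hdb' hbz
              (by intro hE; exact hza hE)
          · subst h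
            exact fun hE => (Stmt5Aux.colour_ne col hcol hcard3 hbb' hdb hdb' hadj.symm
              (Ne.symm hza)) hE.symm
        apply hne2
        rw [show s(b, a) = s(a, b) from Sym2.eq_swap, hwcol]
    · -- non-adjacent case
      have ha'b : b ≠ a' := by
        intro hE
        exact hadj (hE ▸ haa')
      obtain ⟨y, hay, hya', P2, hP2, hasup, hnd⟩ :=
        Stmt5Aux.exists_forced_cons col hcol haa'.symm hda' ha'b (Ne.symm hne)
      have hyb : y ≠ b := by
        intro hE
        exact hadj (hE ▸ hay)
      obtain ⟨z, hbz, hzmem⟩ := Stmt5Aux.exists_last_edge P2 hyb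
      have h1 : col s(b, z) ∈ F a := by
        rw [hFab, hFdef]
        exact Finset.mem_image.2 ⟨z, (G.mem_neighborFinset b z).2 hbz, rfl⟩
      rw [hFdef] at h1
      obtain ⟨w, hwmem, hwcol⟩ := Finset.mem_image.mp h1
      have hwadj : G.Adj a w := (G.mem_neighborFinset a w).1 hwmem
      have hmem2 : col s(b, z) ∈ List.map col P2.edges :=
        List.mem_map.2 ⟨s(b, z), hzmem, rfl⟩
      simp only [List.map_cons, List.nodup_cons, List.mem_cons] at hnd
      by_cases hwy : w = y
      · subst hwy
        rw [← hwcol] at hmem2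
        exact hnd.2.1 hmem2
      · have hwa' : w = a' := Stmt5Aux.nbr_eq hda hwadj haa' hay hwy (Ne.symm hya')
        rw [hwa'] at hwcol
        rw [← hwcol] at hmem2
        apply hnd.1
        right
        rw [show s(a', a) = s(a, a') from Sym2.eq_swap]
        exact hmem2
  -- counting
  have hsubT : ∀ v ∈ S, F v ∈ {A : Finset (Fin r) | A.card = 2} := fun v hv => hmemT v hv
  have hTeq : {A : Finset (Fin r) | A.card = 2} =
      ↑((Finset.univ : Finset (Fin r)).powersetCard 2) := by
    ext A
    simp [Finset.mem_powersetCard]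
  have hle : S.ncard ≤ ({A : Finset (Fin r) | A.card = 2} : Set (Finset (Fin r))).ncard :=
    Set.ncard_le_ncard_of_injOn F hsubT hinj (by rw [hTeq]; exact Finset.finite_toSet _)
  rw [hTeq, Set.ncard_coe_finset, Finset.card_powersetCard, Finset.card_univ,
    Fintype.card_fin, Nat.choose_two_right] at hle
  exact hle
end

section
/- For every n ≥ 4, the graph G on n vertices obtained from a cycle v₁v₂⋯v_{n−1}v₁ on n − 1 vertices by adding a new vertex x joined to v₁ and v₂ is 2-connected, has exactly n + 1 edges, and satisfies rc₂(G) ≤ n − 1. -/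
open SimpleGraph

def arcW {V : Type*} (G : SimpleGraph V) (v : ℕ → V) (m : ℕ)
    (hA : ∀ k, k + 1 ≤ m → G.Adj (v k) (v (k + 1))) (i : ℕ) :
    (k : ℕ) → i + k ≤ m → G.Walk (v i) (v (i + k))
  | 0, _ => Walk.nil
  | k+1, h => (arcW G v m hA i k (by omega)).concat (hA (i + k) (by omega))

lemma arcW_support {V : Type*} (G : SimpleGraph V) (v : ℕ → V) (m : ℕ)
    (hA : ∀ k, k + 1 ≤ m → G.Adj (v k) (v (k + 1))) (i : ℕ) :
    ∀ (k : ℕ) (h : i + k ≤ m),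
      (arcW G v m hA i k h).support = (List.range (k + 1)).map (fun t => v (i + t))
  | 0, _ => by simp only [arcW, Walk.support_nil]; rfl
  | k+1, h => by
    rw [arcW, Walk.support_concat, arcW_support G v m hA i k (by omega)]
    conv_rhs => rw [List.range_succ]
    simp only [List.concat_eq_append, List.map_append, List.map_cons, List.map_nil]

lemma arcW_edges {V : Type*} (G : SimpleGraph V) (v : ℕ → V) (m : ℕ)
    (hA : ∀ k, k + 1 ≤ m → G.Adj (v k) (v (k + 1))) (i : ℕ) :
    ∀ (k : ℕ) (h : i + k ≤ m),
      (arcW G v m hA i k h).edges = (List.range k).map (fun t => s(v (i + t), v (i + t + 1)))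
  | 0, _ => by simp [arcW]
  | k+1, h => by
    rw [arcW, Walk.edges_concat, arcW_edges G v m hA i k (by omega)]
    conv_rhs => rw [List.range_succ]
    simp only [List.concat_eq_append, List.map_append, List.map_cons, List.map_nil]
    rfl

def colN (m i j : ℕ) : ℕ :=
  if max i j = min i j + 1 then min i j
  else if min i j = 0 ∧ max i j = m then m
  else if min i j = 0 ∧ max i j = m + 1 then 1
  else if min i j = 1 ∧ max i j = m + 1 then m
  else 0

lemma colN_symm (m i j : ℕ) : colN m i j = colN m j i := by
  unfold colN; rw [min_comm j i, max_comm j i]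

open scoped Classical in
noncomputable def idxF {V : Type*} (v : ℕ → V) (m : ℕ) (u : V) : ℕ :=
  if h : ∃ i, i ≤ m ∧ v i = u then h.choose else m + 1

lemma idxF_v {V : Type*} {v : ℕ → V} {m : ℕ}
    (hvinj : ∀ i j, i ≤ m → j ≤ m → v i = v j → i = j) {i : ℕ} (hi : i ≤ m) :
    idxF v m (v i) = i := by
  have h : ∃ j, j ≤ m ∧ v j = v i := ⟨i, hi, rfl⟩
  rw [idxF, dif_pos h]
  exact hvinj _ _ h.choose_spec.1 hi h.choose_spec.2

lemma idxF_x {V : Type*} {v : ℕ → V} {m : ℕ} {x : V}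
    (hxv : ∀ i, i ≤ m → x ≠ v i) : idxF v m x = m + 1 := by
  rw [idxF, dif_neg]
  rintro ⟨i, hi, he⟩
  exact hxv i hi he.symm

noncomputable def colE {V : Type*} (v : ℕ → V) (m : ℕ) : Sym2 V → Fin (m + 1) :=
  Sym2.lift ⟨fun a b => ⟨min (colN m (idxF v m a) (idxF v m b)) m, by omega⟩,
    fun a b => by
      apply Fin.ext
      simp only
      rw [colN_symm]⟩

lemma colE_val {V : Type*} (v : ℕ → V) (m : ℕ) (a b : V) :
    (colE v m s(a, b)).val = min (colN m (idxF v m a) (idxF v m b)) m := rfl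

section evals
variable {V : Type*} {v : ℕ → V} {m : ℕ} {x : V}
  (hm : 2 ≤ m)
  (hvinj : ∀ i j, i ≤ m → j ≤ m → v i = v j → i = j)
  (hxv : ∀ i, i ≤ m → x ≠ v i)

include hm hvinj in
lemma colE_cyc {k : ℕ} (hk : k + 1 ≤ m) : (colE v m s(v k, v (k + 1))).val = k := by
  rw [colE_val, idxF_v hvinj (by omega), idxF_v hvinj (by omega)]
  unfold colN; split_ifs <;> omega

include hm hvinj in
lemma colE_wrap : (colE v m s(v m, v 0)).val = m := by
  rw [colE_val, idxF_v hvinj (by omega), idxF_v hvinj (by omega)]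
  unfold colN; split_ifs <;> omega

include hm hvinj hxv in
lemma colE_x0 : (colE v m s(x, v 0)).val = 1 := by
  rw [colE_val, idxF_x hxv, idxF_v hvinj (by omega)]
  unfold colN; split_ifs <;> omega

include hm hvinj hxv in
lemma colE_x1 : (colE v m s(x, v 1)).val = m := by
  rw [colE_val, idxF_x hxv, idxF_v hvinj (by omega)]
  unfold colN; split_ifs <;> omega

end evals

section helpers
variable {V : Type*} {vx : ℕ → V} {M : ℕ}

lemma helper_nodup (hinj : ∀ a b, a ≤ M → b ≤ M → vx a = vx b → a = b)
    {L : List ℕ} (hb : ∀ t ∈ L, t ≤ M) (hL : L.Nodup) : (L.map vx).Nodup :=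
  hL.map_on (fun a ha b hb' h => hinj a b (hb a ha) (hb b hb') h)

lemma helper_disj (hinj : ∀ a b, a ≤ M → b ≤ M → vx a = vx b → a = b)
    {L1 L2 : List ℕ} (hb1 : ∀ t ∈ L1, t ≤ M) (hb2 : ∀ t ∈ L2, t ≤ M)
    {a b : ℕ} (h : ∀ t, t ∈ L1 → t ∈ L2 → t = a ∨ t = b) :
    ∀ z, z ∈ L1.map vx → z ∈ L2.map vx → z = vx a ∨ z = vx b := by
  intro z hz1 hz2
  obtain ⟨t1, ht1, rfl⟩ := List.mem_map.mp hz1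
  obtain ⟨t2, ht2, he⟩ := List.mem_map.mp hz2
  have : t2 = t1 := hinj _ _ (hb2 _ ht2) (hb1 _ ht1) he
  subst this
  rcases h _ ht1 ht2 with rfl | rfl
  · exact Or.inl rfl
  · exact Or.inr rfl

lemma helper_ne {G : SimpleGraph V} {u w : V}
    (hinj : ∀ a b, a ≤ M → b ≤ M → vx a = vx b → a = b)
    {p q : G.Walk u w} {L1 L2 : List ℕ}
    (hp : p.support = L1.map vx) (hq : q.support = L2.map vx)
    (hb2 : ∀ t ∈ L2, t ≤ M) {t0 : ℕ} (ht0 : t0 ≤ M)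
    (h1 : t0 ∈ L1) (h2 : t0 ∉ L2) : p ≠ q := by
  intro h
  have hm : vx t0 ∈ q.support := by
    rw [← h, hp]; exact List.mem_map.mpr ⟨t0, h1, rfl⟩
  rw [hq] at hm
  obtain ⟨t, ht, he⟩ := List.mem_map.mp hm
  exact h2 (hinj _ _ (hb2 _ ht) ht0 he ▸ ht)

lemma helper_rainbow {r : ℕ} {col : Sym2 V → Fin r} {l : List (Sym2 V)}
    {C : List ℕ} (h : l.map (fun e => (col e).val) = C) (hC : C.Nodup) :
    (l.map col).Nodup := by
  have h2 : (l.map col).map Fin.val = C := by rw [List.map_map]; exact h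
  exact List.Nodup.of_map Fin.val (h2 ▸ hC)

end helpers


def vxF {V : Type*} (v : ℕ → V) (m : ℕ) (x : V) : ℕ → V :=
  fun t => if t = m + 1 then x else v t

section vx
variable {V : Type*} {v : ℕ → V} {m : ℕ} {x : V}

lemma vxF_top : vxF v m x (m + 1) = x := if_pos rfl

lemma vxF_lt {t : ℕ} (ht : t ≤ m) : vxF v m x t = v t := if_neg (by omega)

lemma vxF_inj (hvinj : ∀ i j, i ≤ m → j ≤ m → v i = v j → i = j)
    (hxv : ∀ i, i ≤ m → x ≠ v i) :
    ∀ a b, a ≤ m + 1 → b ≤ m + 1 → vxF v m x a = vxF v m x b → a = b := by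
  intro a b ha hb h
  unfold vxF at h
  split_ifs at h with h1 h2 h2
  · omega
  · exact absurd h (hxv b (by omega))
  · exact absurd h.symm (hxv a (by omega))
  · exact hvinj a b (by omega) (by omega) h

end vx

section main
variable {V : Type*} {G : SimpleGraph V} {v : ℕ → V} {m : ℕ} {x : V}

lemma goodPair_vv (hm : 2 ≤ m)
    (hvinj : ∀ i j, i ≤ m → j ≤ m → v i = v j → i = j)
    (hA : ∀ k, k + 1 ≤ m → G.Adj (v k) (v (k + 1)))
    (hA2 : G.Adj (v m) (v 0))
    {i j : ℕ} (hij : i < j) (hj : j ≤ m) :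
    ∃ p q : G.Walk (v i) (v j), p.IsPath ∧ q.IsPath ∧ p ≠ q ∧
      IsRainbowWalk (colE v m) p ∧ IsRainbowWalk (colE v m) q ∧
      ∀ z : V, z ∈ p.support → z ∈ q.support → z = v i ∨ z = v j := by
  set P : G.Walk (v i) (v j) :=
    (arcW G v m hA i (j - i) (by omega)).copy rfl (congrArg v (by omega)) with hP
  set A : G.Walk (v 0) (v i) :=
    (arcW G v m hA 0 i (by omega)).copy rfl (congrArg v (by omega)) with hAdef
  set B : G.Walk (v j) (v m) :=
    (arcW G v m hA j (m - j) (by omega)).copy rfl (congrArg v (by omega)) with hBdef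
  set Q : G.Walk (v i) (v j) := A.reverse.append (Walk.cons hA2.symm B.reverse) with hQ
  set LP : List ℕ := (List.range (j - i + 1)).map (i + ·) with hLP
  set LQ : List ℕ :=
    (List.range (i + 1)).reverse ++ ((List.range (m - j + 1)).map (j + ·)).reverse with hLQ
  have hPs : P.support = LP.map v := by
    rw [hP, Walk.support_copy, arcW_support, hLP, List.map_map]; rfl
  have hQs : Q.support = LQ.map v := by
    rw [hQ, Walk.support_append, Walk.support_cons, List.tail_cons,
      Walk.support_reverse, Walk.support_reverse, hAdef, hBdef,
      Walk.support_copy, Walk.support_copy, arcW_support, arcW_support,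
      hLQ, List.map_append, List.map_reverse, List.map_reverse, List.map_map]
    congr 1
    · congr 1; exact List.map_congr_left fun t ht => by rw [Nat.zero_add]
  have hPc : P.edges.map (fun e => ((colE v m) e).val) = (List.range (j - i)).map (i + ·) := by
    rw [hP, Walk.edges_copy, arcW_edges, List.map_map]
    refine List.map_congr_left fun t ht => ?_
    simp only [List.mem_range] at ht
    simpa using colE_cyc hm hvinj (k := i + t) (by omega)
  have hQc : Q.edges.map (fun e => ((colE v m) e).val) =
      (List.range i).reverse ++ (m :: ((List.range (m - j)).map (j + ·)).reverse) := by
    rw [hQ, Walk.edges_append, Walk.edges_cons, Walk.edges_reverse, Walk.edges_reverse,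
      hAdef, hBdef, Walk.edges_copy, Walk.edges_copy, arcW_edges, arcW_edges,
      List.map_append, List.map_reverse, List.map_cons, List.map_reverse, List.map_map,
      List.map_map]
    congr 1
    · congr 1
      conv_rhs => rw [← List.map_id (List.range i)]
      refine List.map_congr_left fun t ht => ?_
      simp only [List.mem_range] at ht
      have := colE_cyc hm hvinj (k := t) (by omega)
      simpa [Nat.zero_add] using this
    · congr 1
      · rw [Sym2.eq_swap]; exact colE_wrap hm hvinj
      · congr 1
        refine List.map_congr_left fun t ht => ?_
        simp only [List.mem_range] at ht
        simpa using colE_cyc hm hvinj (k := j + t) (by omega)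
  have hbP : ∀ t ∈ LP, t ≤ m := by
    intro t ht; rw [hLP] at ht; simp only [List.mem_map, List.mem_range] at ht
    obtain ⟨a, ha, rfl⟩ := ht; omega
  have hbQ : ∀ t ∈ LQ, t ≤ m := by
    intro t ht; rw [hLQ] at ht
    simp only [List.mem_append, List.mem_reverse, List.mem_map, List.mem_range] at ht
    rcases ht with h | ⟨a, ha, rfl⟩ <;> omega
  have hPpath : P.IsPath := by
    rw [Walk.isPath_def, hPs]
    refine helper_nodup hvinj hbP ?_
    exact List.nodup_range.map (fun a b h => by omega)
  have hQpath : Q.IsPath := by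
    rw [Walk.isPath_def, hQs]
    refine helper_nodup hvinj hbQ ?_
    rw [hLQ, List.nodup_append]
    refine ⟨List.nodup_reverse.mpr List.nodup_range,
      List.nodup_reverse.mpr (List.nodup_range.map (fun a b h => by omega)), ?_⟩
    intro t ht1 t' ht2 rfl
    simp only [List.mem_reverse, List.mem_map, List.mem_range] at ht1 ht2
    obtain ⟨a, ha, rfl⟩ := ht2; omega
  have hPrb : IsRainbowWalk (colE v m) P := helper_rainbow hPc
    (List.nodup_range.map (fun a b h => by omega))
  have hQrb : IsRainbowWalk (colE v m) Q := by
    refine helper_rainbow hQc ?_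
    rw [List.nodup_append]
    refine ⟨List.nodup_reverse.mpr List.nodup_range, ?_, ?_⟩
    · rw [List.nodup_cons]
      refine ⟨?_, List.nodup_reverse.mpr (List.nodup_range.map (fun a b h => by omega))⟩
      simp only [List.mem_reverse, List.mem_map, List.mem_range]
      rintro ⟨a, h1, h2⟩; omega
    · intro t ht1 t' ht2 rfl
      simp only [List.mem_reverse, List.mem_range, List.mem_cons, List.mem_map] at ht1 ht2
      rcases ht2 with rfl | ⟨a, h1, rfl⟩ <;> omega
  have hne : P ≠ Q := by
    intro h
    have h2 := congrArg (fun (w : G.Walk (v i) (v j)) => w.edges.map (fun e => ((colE v m) e).val)) h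
    rw [hPc, hQc] at h2
    have hmem : m ∈ (List.range (j - i)).map (i + ·) := by
      rw [h2]; simp
    simp only [List.mem_map, List.mem_range] at hmem
    obtain ⟨a, h1, h2⟩ := hmem; omega
  refine ⟨P, Q, hPpath, hQpath, hne, hPrb, hQrb, ?_⟩
  intro z hz1 hz2
  rw [hPs] at hz1; rw [hQs] at hz2
  refine helper_disj hvinj hbP hbQ (a := i) (b := j) ?_ z hz1 hz2
  intro t ht1 ht2
  rw [hLP] at ht1; rw [hLQ] at ht2
  simp only [List.mem_map, List.mem_range, List.mem_append, List.mem_reverse] at ht1 ht2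
  obtain ⟨a, ha, rfl⟩ := ht1
  rcases ht2 with h | ⟨b, hb, he⟩ <;> omega


lemma goodPair_swap {col : Sym2 V → α} {u w : V}
    (h : ∃ p q : G.Walk u w, p.IsPath ∧ q.IsPath ∧ p ≠ q ∧
      IsRainbowWalk col p ∧ IsRainbowWalk col q ∧
      ∀ z : V, z ∈ p.support → z ∈ q.support → z = u ∨ z = w) :
    ∃ p q : G.Walk w u, p.IsPath ∧ q.IsPath ∧ p ≠ q ∧
      IsRainbowWalk col p ∧ IsRainbowWalk col q ∧
      ∀ z : V, z ∈ p.support → z ∈ q.support → z = w ∨ z = u := by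
  obtain ⟨p, q, hp, hq, hne, hrp, hrq, hd⟩ := h
  refine ⟨p.reverse, q.reverse, (Walk.isPath_reverse_iff p).mpr hp,
    (Walk.isPath_reverse_iff q).mpr hq, ?_, ?_, ?_, ?_⟩
  · intro h
    apply hne
    have := congrArg Walk.reverse h
    simpa [Walk.reverse_reverse] using this
  · unfold IsRainbowWalk at hrp ⊢
    rw [Walk.edges_reverse, List.map_reverse, List.nodup_reverse]
    exact hrp
  · unfold IsRainbowWalk at hrq ⊢
    rw [Walk.edges_reverse, List.map_reverse, List.nodup_reverse]
    exact hrq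
  · intro z h1 h2
    rw [Walk.support_reverse, List.mem_reverse] at h1 h2
    exact (hd z h1 h2).symm

lemma goodPair_xv (hm : 2 ≤ m)
    (hvinj : ∀ i j, i ≤ m → j ≤ m → v i = v j → i = j)
    (hxv : ∀ i, i ≤ m → x ≠ v i)
    (hA : ∀ k, k + 1 ≤ m → G.Adj (v k) (v (k + 1)))
    (hA2 : G.Adj (v m) (v 0)) (hA3 : G.Adj x (v 0)) (hA4 : G.Adj x (v 1))
    {i : ℕ} (hi : i ≤ m) :
    ∃ p q : G.Walk x (v i), p.IsPath ∧ q.IsPath ∧ p ≠ q ∧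
      IsRainbowWalk (colE v m) p ∧ IsRainbowWalk (colE v m) q ∧
      ∀ z : V, z ∈ p.support → z ∈ q.support → z = x ∨ z = v i := by
  have hx0 := hxv 0 (by omega)
  have hx1 := hxv 1 (by omega)
  have h10 : v 1 ≠ v 0 := fun h => by have := hvinj 1 0 (by omega) (by omega) h; omega
  rcases Nat.lt_or_ge i 2 with hi2 | hi2
  · interval_cases i
    · -- i = 0
      refine ⟨Walk.cons hA3 Walk.nil, Walk.cons hA4 (Walk.cons (show G.Adj (v 1) (v 0) from (hA 0 (by omega)).symm) Walk.nil),
        ?_, ?_, ?_, ?_, ?_, ?_⟩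
      · simp [Walk.isPath_def, hx0]
      · simp [Walk.isPath_def, hx0, hx1, h10]
      · intro h
        have := congrArg Walk.support h
        simp at this
      · simp [IsRainbowWalk]
      · have c1 : ((colE v m) s(x, v 1)).val = m := colE_x1 hm hvinj hxv
        have c2 : ((colE v m) s(v 1, v 0)).val = 0 := by
          rw [Sym2.eq_swap]; exact colE_cyc hm hvinj (by omega)
        simp only [IsRainbowWalk, Walk.edges_cons, Walk.edges_nil, List.map_cons, List.map_nil]
        simp only [List.nodup_cons, List.mem_singleton, List.nodup_nil, and_true,
          List.not_mem_nil, not_false_iff, List.mem_cons, or_false]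
        intro h
        rw [h] at c1
        omega
      · intro z h1 h2
        simp only [Walk.support_cons, Walk.support_nil, List.mem_cons, List.not_mem_nil,
          or_false] at h1
        rcases h1 with rfl | rfl
        · exact Or.inl rfl
        · exact Or.inr rfl
    · -- i = 1
      refine ⟨Walk.cons hA4 Walk.nil, Walk.cons hA3 (Walk.cons (show G.Adj (v 0) (v 1) from hA 0 (by omega)) Walk.nil),
        ?_, ?_, ?_, ?_, ?_, ?_⟩
      · simp [Walk.isPath_def, hx1]
      · simp [Walk.isPath_def, hx0, hx1, h10.symm]
      · intro h
        have := congrArg Walk.support h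
        simp at this
      · simp [IsRainbowWalk]
      · have c1 : ((colE v m) s(x, v 0)).val = 1 := colE_x0 hm hvinj hxv
        have c2 : ((colE v m) s(v 0, v 1)).val = 0 := colE_cyc hm hvinj (by omega)
        simp only [IsRainbowWalk, Walk.edges_cons, Walk.edges_nil, List.map_cons, List.map_nil]
        simp only [List.nodup_cons, List.mem_singleton, List.nodup_nil, and_true,
          List.not_mem_nil, not_false_iff, List.mem_cons, or_false]
        intro h
        rw [h] at c1
        omega
      · intro z h1 h2
        simp only [Walk.support_cons, Walk.support_nil, List.mem_cons, List.not_mem_nil,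
          or_false] at h1
        rcases h1 with rfl | rfl
        · exact Or.inl rfl
        · exact Or.inr rfl
  · -- 2 ≤ i ≤ m
    set B : G.Walk (v i) (v m) :=
      (arcW G v m hA i (m - i) (by omega)).copy rfl (congrArg v (by omega)) with hBdef
    set P : G.Walk x (v i) := Walk.cons hA3 (Walk.cons hA2.symm B.reverse) with hPdef
    set A1 : G.Walk (v 1) (v i) :=
      (arcW G v m hA 1 (i - 1) (by omega)).copy rfl (congrArg v (by omega)) with hA1def
    set Q : G.Walk x (v i) := Walk.cons hA4 A1 with hQdef
    set LP : List ℕ := (m + 1) :: 0 :: ((List.range (m - i + 1)).map (i + ·)).reverse with hLP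
    set LQ : List ℕ := (m + 1) :: (List.range (i - 1 + 1)).map (1 + ·) with hLQ
    have hPs : P.support = LP.map (vxF v m x) := by
      rw [hPdef, Walk.support_cons, Walk.support_cons, Walk.support_reverse, hBdef,
        Walk.support_copy, arcW_support, hLP, List.map_cons, List.map_cons, vxF_top,
        vxF_lt (by omega), List.map_reverse, List.map_map]
      congr 3
      refine List.map_congr_left fun t ht => ?_
      simp only [List.mem_range] at ht
      simp only [Function.comp_apply]
      rw [vxF_lt (by omega)]
    have hQs : Q.support = LQ.map (vxF v m x) := by
      rw [hQdef, Walk.support_cons, hA1def, Walk.support_copy, arcW_support, hLQ,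
        List.map_cons, vxF_top, List.map_map]
      congr 1
      refine List.map_congr_left fun t ht => ?_
      simp only [List.mem_range] at ht
      simp only [Function.comp_apply]
      rw [vxF_lt (by omega)]
    have hPc : P.edges.map (fun e => ((colE v m) e).val) =
        1 :: m :: ((List.range (m - i)).map (i + ·)).reverse := by
      rw [hPdef, Walk.edges_cons, Walk.edges_cons, Walk.edges_reverse, hBdef, Walk.edges_copy,
        arcW_edges, List.map_cons, List.map_cons, List.map_reverse, List.map_map]
      congr 1
      · exact colE_x0 hm hvinj hxv
      congr 1
      · rw [Sym2.eq_swap]; exact colE_wrap hm hvinj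
      congr 1
      refine List.map_congr_left fun t ht => ?_
      simp only [List.mem_range] at ht
      simpa using colE_cyc hm hvinj (k := i + t) (by omega)
    have hQc : Q.edges.map (fun e => ((colE v m) e).val) =
        m :: (List.range (i - 1)).map (1 + ·) := by
      rw [hQdef, Walk.edges_cons, hA1def, Walk.edges_copy, arcW_edges, List.map_cons,
        List.map_map]
      congr 1
      · exact colE_x1 hm hvinj hxv
      refine List.map_congr_left fun t ht => ?_
      simp only [List.mem_range] at ht
      simpa using colE_cyc hm hvinj (k := 1 + t) (by omega)
    have hbP : ∀ t ∈ LP, t ≤ m + 1 := by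
      intro t ht; rw [hLP] at ht
      simp only [List.mem_cons, List.mem_reverse, List.mem_map, List.mem_range] at ht
      rcases ht with rfl | rfl | ⟨a, ha, rfl⟩ <;> omega
    have hbQ : ∀ t ∈ LQ, t ≤ m + 1 := by
      intro t ht; rw [hLQ] at ht
      simp only [List.mem_cons, List.mem_map, List.mem_range] at ht
      rcases ht with rfl | ⟨a, ha, rfl⟩ <;> omega
    have hinj := vxF_inj hvinj hxv
    have hPpath : P.IsPath := by
      rw [Walk.isPath_def, hPs]
      refine helper_nodup hinj hbP ?_
      rw [hLP]
      simp only [List.nodup_cons, List.mem_cons, List.mem_reverse, List.mem_map, List.mem_range]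
      refine ⟨?_, ?_, List.nodup_reverse.mpr (List.nodup_range.map (fun a b h => by omega))⟩
      · rintro (h | ⟨a, ha, h⟩) <;> omega
      · rintro ⟨a, ha, h⟩; omega
    have hQpath : Q.IsPath := by
      rw [Walk.isPath_def, hQs]
      refine helper_nodup hinj hbQ ?_
      rw [hLQ]
      simp only [List.nodup_cons, List.mem_map, List.mem_range]
      refine ⟨?_, List.nodup_range.map (fun a b h => by omega)⟩
      rintro ⟨a, ha, h⟩; omega
    have hPrb : IsRainbowWalk (colE v m) P := by
      refine helper_rainbow hPc ?_
      simp only [List.nodup_cons, List.mem_cons, List.mem_reverse, List.mem_map, List.mem_range]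
      refine ⟨?_, ?_, List.nodup_reverse.mpr (List.nodup_range.map (fun a b h => by omega))⟩
      · rintro (h | ⟨a, ha, h⟩) <;> omega
      · rintro ⟨a, ha, h⟩; omega
    have hQrb : IsRainbowWalk (colE v m) Q := by
      refine helper_rainbow hQc ?_
      simp only [List.nodup_cons, List.mem_map, List.mem_range]
      refine ⟨?_, List.nodup_range.map (fun a b h => by omega)⟩
      rintro ⟨a, ha, h⟩; omega
    have hne : P ≠ Q := by
      refine helper_ne hinj hPs hQs hbQ (t0 := 0) (by omega) ?_ ?_
      · rw [hLP]; simp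
      · rw [hLQ]
        simp only [List.mem_cons, List.mem_map, List.mem_range]
        rintro (h | ⟨a, ha, h⟩) <;> omega
    refine ⟨P, Q, hPpath, hQpath, hne, hPrb, hQrb, ?_⟩
    intro z hz1 hz2
    rw [hPs] at hz1; rw [hQs] at hz2
    have := helper_disj hinj hbP hbQ (a := m + 1) (b := i) ?_ z hz1 hz2
    · rcases this with h | h
      · rw [vxF_top] at h; exact Or.inl h
      · rw [vxF_lt hi] at h; exact Or.inr h
    · intro t ht1 ht2
      rw [hLP] at ht1; rw [hLQ] at ht2
      simp only [List.mem_cons, List.mem_reverse, List.mem_map, List.mem_range] at ht1 ht2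
      rcases ht1 with rfl | rfl | ⟨a, ha, rfl⟩ <;>
        rcases ht2 with h | ⟨b, hb, he⟩ <;> omega

end main

lemma chain_reach {V : Type*} (G : SimpleGraph V) (v : ℕ → V) (m : ℕ)
    (hA : ∀ k, k + 1 ≤ m → G.Adj (v k) (v (k + 1))) (s : Set V) (i : ℕ) :
    ∀ (k : ℕ), i + k ≤ m → ∀ (hs : ∀ t, i ≤ t → t ≤ i + k → v t ∈ s),
      (G.induce s).Reachable ⟨v i, hs i le_rfl (by omega)⟩ ⟨v (i + k), hs (i + k) (by omega) le_rfl⟩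
  | 0, h, hs => Reachable.refl _
  | k+1, h, hs => by
    refine (chain_reach G v m hA s i k (by omega) (fun t h1 h2 => hs t h1 (by omega))).trans ?_
    refine Adj.reachable ?_
    have : G.Adj (v (i + k)) (v (i + k + 1)) := hA (i + k) (by omega)
    exact this

section conn
variable {V : Type*} {G : SimpleGraph V} {v : ℕ → V} {m : ℕ} {x : V}

lemma conn_lemma (hm : 2 ≤ m)
    (hvinj : ∀ i j, i ≤ m → j ≤ m → v i = v j → i = j)
    (hxv : ∀ i, i ≤ m → x ≠ v i)
    (hclass : ∀ u : V, u = x ∨ ∃ i, i ≤ m ∧ u = v i)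
    (hA : ∀ k, k + 1 ≤ m → G.Adj (v k) (v (k + 1)))
    (hA2 : G.Adj (v m) (v 0)) (hA3 : G.Adj x (v 0)) (hA4 : G.Adj x (v 1))
    (w : V) : (G.induce ({w}ᶜ : Set V)).Connected := by
  rw [connected_iff]
  constructor
  · -- preconnected: find a hub reachable from everything
    suffices h : ∃ hub : ({w}ᶜ : Set V),
        ∀ a : ({w}ᶜ : Set V), (G.induce ({w}ᶜ : Set V)).Reachable a hub by
      obtain ⟨hub, hh⟩ := h
      intro a b
      exact (hh a).trans (hh b).symm
    have hadj_ind : ∀ (a b : V) (ha : a ∈ ({w}ᶜ : Set V)) (hb : b ∈ ({w}ᶜ : Set V)),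
        G.Adj a b → (G.induce ({w}ᶜ : Set V)).Adj ⟨a, ha⟩ ⟨b, hb⟩ := by
      intro a b ha hb h
      simpa using h
    rcases hclass w with rfl | ⟨mw, hmw, rfl⟩
    · -- w = x : hub is v 0
      have hmem : ∀ t, t ≤ m → v t ∈ ({w}ᶜ : Set V) := by
        intro t ht
        simp only [Set.mem_compl_iff, Set.mem_singleton_iff]
        exact fun h => hxv t ht h.symm
      refine ⟨⟨v 0, hmem 0 (by omega)⟩, ?_⟩
      rintro ⟨a, ha⟩
      rcases hclass a with rfl | ⟨i, hi, rfl⟩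
      · simp at ha
      · have h := chain_reach G v m hA ({w}ᶜ : Set V) 0 i (by omega)
          (fun t h1 h2 => hmem t (by omega))
        have h2 : (G.induce ({w}ᶜ : Set V)).Reachable ⟨v 0, hmem 0 (by omega)⟩ ⟨v i, ha⟩ := by
          convert h using 2
          rw [Nat.zero_add]
        exact h2.symm
    · -- w = v mw
      have hxmem : x ∈ ({v mw}ᶜ : Set V) := by
        simp only [Set.mem_compl_iff, Set.mem_singleton_iff]
        exact hxv mw hmw
      have hvmem : ∀ t, t ≤ m → t ≠ mw → v t ∈ ({v mw}ᶜ : Set V) := by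
        intro t ht hne
        simp only [Set.mem_compl_iff, Set.mem_singleton_iff]
        exact fun h => hne (hvinj t mw ht hmw h)
      rcases Nat.eq_zero_or_pos mw with rfl | hmwpos
      · -- mw = 0 : hub is v 1
        refine ⟨⟨v 1, hvmem 1 (by omega) (by omega)⟩, ?_⟩
        rintro ⟨a, ha⟩
        rcases hclass a with rfl | ⟨i, hi, rfl⟩
        · exact Adj.reachable (hadj_ind _ _ hxmem _ hA4)
        · have hine : i ≠ 0 := by
            intro h; subst h; simp at ha
          have h := chain_reach G v m hA ({v 0}ᶜ : Set V) 1 (i - 1) (by omega)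
            (fun t h1 h2 => hvmem t (by omega) (by omega))
          have h2 : (G.induce ({v 0}ᶜ : Set V)).Reachable ⟨v 1, hvmem 1 (by omega) (by omega)⟩
              ⟨v i, ha⟩ := by
            convert h using 2
            rw [show 1 + (i - 1) = i from by omega]
          exact h2.symm
      · -- mw ≥ 1 : hub is v 0
        refine ⟨⟨v 0, hvmem 0 (by omega) (by omega)⟩, ?_⟩
        rintro ⟨a, ha⟩
        rcases hclass a with rfl | ⟨i, hi, rfl⟩
        · exact Adj.reachable (hadj_ind _ _ hxmem _ hA3)
        · have hine : i ≠ mw := by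
            intro h; subst h; simp at ha
          rcases Nat.lt_or_ge i mw with hilt | higt
          · have h := chain_reach G v m hA ({v mw}ᶜ : Set V) 0 i (by omega)
              (fun t h1 h2 => hvmem t (by omega) (by omega))
            have h2 : (G.induce ({v mw}ᶜ : Set V)).Reachable
                ⟨v 0, hvmem 0 (by omega) (by omega)⟩ ⟨v i, ha⟩ := by
              convert h using 2
              rw [Nat.zero_add]
            exact h2.symm
          · have h := chain_reach G v m hA ({v mw}ᶜ : Set V) i (m - i) (by omega)
              (fun t h1 h2 => hvmem t (by omega) (by omega))
            have h2 : (G.induce ({v mw}ᶜ : Set V)).Reachable ⟨v i, ha⟩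
                ⟨v m, hvmem m (by omega) (by omega)⟩ := by
              convert h using 2
              rw [show i + (m - i) = m from by omega]
            exact h2.trans (Adj.reachable (hadj_ind _ _ (hvmem m (by omega) (by omega)) _ hA2))
  · -- nonempty
    by_cases hw : w = x
    · subst hw
      exact ⟨⟨v 0, by simpa using fun h => hxv 0 (by omega) h.symm⟩⟩
    · exact ⟨⟨x, by simpa using fun h => hw h.symm⟩⟩
end conn

section count
variable {V : Type*} {G : SimpleGraph V} {v : ℕ → V} {m : ℕ} {x : V}

lemma count_lemma (hm : 2 ≤ m)
    (hvinj : ∀ i j, i ≤ m → j ≤ m → v i = v j → i = j)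
    (hxv : ∀ i, i ≤ m → x ≠ v i)
    (hadjS : ∀ a b : V, G.Adj a b ↔
      (∃ i, i + 1 ≤ m ∧ s(a, b) = s(v i, v (i + 1))) ∨
      s(a, b) = s(v m, v 0) ∨ s(a, b) = s(x, v 0) ∨ s(a, b) = s(x, v 1)) :
    G.edgeSet.ncard = m + 3 := by
  classical
  set E : Finset (Sym2 V) :=
    ((Finset.range m).image fun k => s(v k, v (k + 1))) ∪
      {s(v m, v 0), s(x, v 0), s(x, v 1)} with hE
  have hset : G.edgeSet = ↑E := by
    ext e
    induction e using Sym2.ind with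
    | _ a b =>
      rw [mem_edgeSet, hadjS]
      simp only [hE, Finset.coe_union, Finset.coe_image, Finset.coe_range, Set.mem_union,
        Set.mem_image, Set.mem_setOf_eq, Set.mem_Iio, Finset.coe_insert, Set.mem_insert_iff,
        Finset.coe_singleton, Set.mem_singleton_iff]
      constructor
      · rintro (⟨i, hi, he⟩ | he | he | he)
        · exact Or.inl ⟨i, by omega, he.symm⟩
        · exact Or.inr (Or.inl he)
        · exact Or.inr (Or.inr (Or.inl he))
        · exact Or.inr (Or.inr (Or.inr he))
      · rintro (⟨i, hi, he⟩ | he | he | he)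
        · exact Or.inl ⟨i, by omega, he.symm⟩
        · exact Or.inr (Or.inl he)
        · exact Or.inr (Or.inr (Or.inl he))
        · exact Or.inr (Or.inr (Or.inr he))
  have hv_ne_x : ∀ i, i ≤ m → v i ≠ x := fun i hi h => hxv i hi h.symm
  have d1 : ¬ (v m = x) := hv_ne_x m (by omega)
  have d1' : ¬ (x = v m) := fun h => d1 h.symm
  have d2 : ¬ (v 0 = x) := hv_ne_x 0 (by omega)
  have d2' : ¬ (x = v 0) := fun h => d2 h.symm
  have d3 : ¬ (v 1 = x) := hv_ne_x 1 (by omega)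
  have d3' : ¬ (x = v 1) := fun h => d3 h.symm
  have d4 : ¬ (v 0 = v 1) := fun h => by have := hvinj 0 1 (by omega) (by omega) h; omega
  have d4' : ¬ (v 1 = v 0) := fun h => d4 h.symm
  have dm1 : ¬ (v m = v 1) := fun h => by have := hvinj m 1 (by omega) (by omega) h; omega
  have dm1' : ¬ (v 1 = v m) := fun h => dm1 h.symm
  have dm0 : ¬ (v m = v 0) := fun h => by have := hvinj m 0 (by omega) (by omega) h; omega
  have dm0' : ¬ (v 0 = v m) := fun h => dm0 h.symm
  have h3 : ({s(v m, v 0), s(x, v 0), s(x, v 1)} : Finset (Sym2 V)).card = 3 := by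
    rw [Finset.card_insert_of_notMem, Finset.card_insert_of_notMem,
        Finset.card_singleton] <;>
      simp [Sym2.eq_iff, d1, d1', d2, d2', d3, d3', d4, d4', dm1, dm1', dm0, dm0']
  have hinjOn : Set.InjOn (fun k => s(v k, v (k + 1))) ↑(Finset.range m) := by
    intro a ha b hb h
    simp only [Finset.coe_range, Set.mem_Iio] at ha hb
    rw [Sym2.eq_iff] at h
    rcases h with ⟨h1, h2⟩ | ⟨h1, h2⟩
    · exact hvinj a b (by omega) (by omega) h1
    · have e1 := hvinj a (b + 1) (by omega) (by omega) h1
      have e2 := hvinj (a + 1) b (by omega) (by omega) h2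
      omega
  have hdisj : Disjoint ((Finset.range m).image fun k => s(v k, v (k + 1)))
      ({s(v m, v 0), s(x, v 0), s(x, v 1)} : Finset (Sym2 V)) := by
    rw [Finset.disjoint_left]
    intro e he hee
    simp only [Finset.mem_image, Finset.mem_range] at he
    obtain ⟨k, hk, rfl⟩ := he
    simp only [Finset.mem_insert, Finset.mem_singleton, Sym2.eq_iff] at hee
    rcases hee with (⟨h1, h2⟩ | ⟨h1, h2⟩) | (⟨h1, h2⟩ | ⟨h1, h2⟩) | (⟨h1, h2⟩ | ⟨h1, h2⟩)
    · have := hvinj k m (by omega) (by omega) h1; omega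
    · have e1 := hvinj k 0 (by omega) (by omega) h1
      have e2 := hvinj (k + 1) m (by omega) (by omega) h2; omega
    · exact hv_ne_x k (by omega) h1
    · exact hv_ne_x (k + 1) (by omega) h2
    · exact hv_ne_x k (by omega) h1
    · exact hv_ne_x (k + 1) (by omega) h2
  have hcard : E.card = m + 3 := by
    rw [hE, Finset.card_union_of_disjoint hdisj, Finset.card_image_of_injOn hinjOn,
      Finset.card_range, h3]
  rw [hset, Set.ncard_coe_finset, hcard]
end count


lemma rtc_main {V : Type*} {G : SimpleGraph V} {v : ℕ → V} {m : ℕ} {x : V} (hm : 2 ≤ m)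
    (hvinj : ∀ i j, i ≤ m → j ≤ m → v i = v j → i = j)
    (hxv : ∀ i, i ≤ m → x ≠ v i)
    (hclass : ∀ u : V, u = x ∨ ∃ i, i ≤ m ∧ u = v i)
    (hA : ∀ k, k + 1 ≤ m → G.Adj (v k) (v (k + 1)))
    (hA2 : G.Adj (v m) (v 0)) (hA3 : G.Adj x (v 0)) (hA4 : G.Adj x (v 1)) :
    RainbowTwoConnectedColouring G (colE v m) := by
  intro u w hne
  rcases hclass u with rfl | ⟨i, hi, rfl⟩ <;> rcases hclass w with rfl | ⟨j, hj, rfl⟩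
  · exact absurd rfl hne
  · exact goodPair_xv hm hvinj hxv hA hA2 hA3 hA4 hj
  · exact goodPair_swap (goodPair_xv hm hvinj hxv hA hA2 hA3 hA4 hi)
  · have hij : i ≠ j := fun h => hne (by rw [h])
    rcases Nat.lt_or_ge i j with h | h
    · exact goodPair_vv hm hvinj hA hA2 h hj
    · exact goodPair_swap (goodPair_vv hm hvinj hA hA2 (by omega) hi)

/-- For n ≥ 4, the graph obtained from a cycle v₀v₁⋯v₍n₋₂₎v₀ on
n − 1 vertices by adding a new vertex x joined to v₀ and v₁ is 2-connected,
has n + 1 edges, and satisfies rc₂ ≤ n − 1. -/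
theorem stmt9 (n : ℕ) (hn : 4 ≤ n) {V : Type*} [Fintype V] (hcard : Fintype.card V = n)
    (x : V) (v : ℕ → V)
    (hvinj : ∀ i j, i ≤ n - 2 → j ≤ n - 2 → v i = v j → i = j)
    (hxv : ∀ i, i ≤ n - 2 → x ≠ v i)
    (G : SimpleGraph V)
    (hadj : ∀ a b : V, G.Adj a b ↔
      ((∃ i, i + 1 ≤ n - 2 ∧ ({a, b} : Set V) = {v i, v (i + 1)}) ∨
       ({a, b} : Set V) = {v (n - 2), v 0} ∨
       ({a, b} : Set V) = {x, v 0} ∨ ({a, b} : Set V) = {x, v 1})) :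
    TwoConnected G ∧ G.edgeSet.ncard = n + 1 ∧ rc2 G ≤ n - 1 := by
  classical
  have hm : 2 ≤ n - 2 := by omega
  set m := n - 2 with hmdef
  have hA : ∀ k, k + 1 ≤ m → G.Adj (v k) (v (k + 1)) :=
    fun k hk => (hadj _ _).mpr (Or.inl ⟨k, hk, rfl⟩)
  have hA2 : G.Adj (v m) (v 0) := (hadj _ _).mpr (Or.inr (Or.inl rfl))
  have hA3 : G.Adj x (v 0) := (hadj _ _).mpr (Or.inr (Or.inr (Or.inl rfl)))
  have hA4 : G.Adj x (v 1) := (hadj _ _).mpr (Or.inr (Or.inr (Or.inr rfl)))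
  have hpair : ∀ a b c d : V, (({a, b} : Set V) = {c, d}) ↔ s(a, b) = s(c, d) := by
    intro a b c d; rw [Set.pair_eq_pair_iff, Sym2.eq_iff]
  have hadjS : ∀ a b : V, G.Adj a b ↔
      (∃ i, i + 1 ≤ m ∧ s(a, b) = s(v i, v (i + 1))) ∨
      s(a, b) = s(v m, v 0) ∨ s(a, b) = s(x, v 0) ∨ s(a, b) = s(x, v 1) := by
    intro a b; rw [hadj]; simp only [hpair]
  have hclass : ∀ u : V, u = x ∨ ∃ i, i ≤ m ∧ u = v i := by
    intro u
    have hS : (insert x ((Finset.range (m + 1)).image v) : Finset V) = Finset.univ := by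
      apply Finset.eq_univ_of_card
      rw [Finset.card_insert_of_notMem, Finset.card_image_of_injOn, Finset.card_range, hcard]
      · omega
      · intro a ha b hb h
        simp only [Finset.coe_range, Set.mem_Iio] at ha hb
        exact hvinj a b (by omega) (by omega) h
      · simp only [Finset.mem_image, Finset.mem_range]
        rintro ⟨i, hi, h⟩
        exact hxv i (by omega) h.symm
    have hu := Finset.mem_univ u
    rw [← hS] at hu
    simp only [Finset.mem_insert, Finset.mem_image, Finset.mem_range] at hu
    rcases hu with h | ⟨i, hi, h⟩
    · exact Or.inl h
    · exact Or.inr ⟨i, by omega, h.symm⟩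
  refine ⟨⟨by rw [hcard]; omega, conn_lemma hm hvinj hxv hclass hA hA2 hA3 hA4⟩, ?_, ?_⟩
  · have hc := count_lemma hm hvinj hxv hadjS
    omega
  · rw [show n - 1 = m + 1 from by omega]
    exact Nat.sInf_le ⟨colE v m, rtc_main hm hvinj hxv hclass hA hA2 hA3 hA4⟩
end
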